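/- arXiv:1612.08731 — 4 statements merged into one kernel-verified Lean document; each statement's English description precedes it below -/
import Mathlib

section
/- Primal–dual optimality relation: if (u*, v*) maximizes the dual functional D(u,v) := −tr[ ρ1 Σ_i (exp(u_i + log μ_i) − μ_i) + ρ2 Σ_j (exp(v_j + log ν_j) − ν_j) + ε Σ_{i,j} exp(K(u,v)_{ij}) ] over all collections of symmetric matrices, then the collection γ* defined by γ*_{ij} := exp(K(u*,v*)_{ij}) consists of positive definite matrices and minimizes the primal objective γ ↦ ⟨γ,c⟩ + ρ1·KL(γ1_J | μ) + ρ2·KL(γᵀ1_I | ν) − ε·H(γ) over collections of positive definite matrices. -/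
open Matrix

/-- Matrix exponential of a real matrix. -/
noncomputable def mexp {d : ℕ} (A : Matrix (Fin d) (Fin d) ℝ) : Matrix (Fin d) (Fin d) ℝ :=
  NormedSpace.exp A

/-- Matrix logarithm of a symmetric (hermitian) real matrix, defined through the
eigendecomposition `P = U diag(σ) Uᵀ` as `log P = U diag(log σ) Uᵀ` (junk value `0`
on non-symmetric matrices). -/
noncomputable def mlog {d : ℕ} (A : Matrix (Fin d) (Fin d) ℝ) : Matrix (Fin d) (Fin d) ℝ :=
  if h : A.IsHermitian then
    (h.eigenvectorUnitary : Matrix (Fin d) (Fin d) ℝ)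
      * diagonal (fun i => Real.log (h.eigenvalues i))
      * star (h.eigenvectorUnitary : Matrix (Fin d) (Fin d) ℝ)
  else 0

/-- Quantum (von Neumann) entropy `H(P) = -tr(P log P - P)`. -/
noncomputable def qH {d : ℕ} (P : Matrix (Fin d) (Fin d) ℝ) : ℝ :=
  -(P * mlog P - P).trace

/-- Quantum Kullback-Leibler divergence `KL(P|Q) = tr(P log P - P log Q - P + Q)`. -/
noncomputable def qKL {d : ℕ} (P Q : Matrix (Fin d) (Fin d) ℝ) : ℝ :=
  (P * mlog P - P * mlog Q - P + Q).trace

/-- The kernel `K(u,v)_{ij} = -(c_{ij} + ρ1 u_i + ρ2 v_j)/ε`. -/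
noncomputable def Kern {d : ℕ} {I J : Type*}
    (c : I → J → Matrix (Fin d) (Fin d) ℝ) (ρ1 ρ2 ε : ℝ)
    (u : I → Matrix (Fin d) (Fin d) ℝ) (v : J → Matrix (Fin d) (Fin d) ℝ)
    (i : I) (j : J) : Matrix (Fin d) (Fin d) ℝ :=
  (-ε⁻¹) • (c i j + ρ1 • u i + ρ2 • v j)

/-- Primal entropy-regularized quantum OT objective
`⟨γ,c⟩ + ρ1 KL(γ1_J|μ) + ρ2 KL(γᵀ1_I|ν) - ε H(γ)`. -/
noncomputable def primal {d : ℕ} {I J : Type*} [Fintype I] [Fintype J]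
    (c : I → J → Matrix (Fin d) (Fin d) ℝ)
    (μ : I → Matrix (Fin d) (Fin d) ℝ) (ν : J → Matrix (Fin d) (Fin d) ℝ)
    (ρ1 ρ2 ε : ℝ) (γ : I → J → Matrix (Fin d) (Fin d) ℝ) : ℝ :=
  (∑ i, ∑ j, ((γ i j) * (c i j)ᵀ).trace)
    + ρ1 * ∑ i, qKL (∑ j, γ i j) (μ i)
    + ρ2 * ∑ j, qKL (∑ i, γ i j) (ν j)
    - ε * ∑ i, ∑ j, qH (γ i j)

/-- Dual entropy-regularized quantum OT objective. -/
noncomputable def dualF {d : ℕ} {I J : Type*} [Fintype I] [Fintype J]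
    (c : I → J → Matrix (Fin d) (Fin d) ℝ)
    (μ : I → Matrix (Fin d) (Fin d) ℝ) (ν : J → Matrix (Fin d) (Fin d) ℝ)
    (ρ1 ρ2 ε : ℝ)
    (u : I → Matrix (Fin d) (Fin d) ℝ) (v : J → Matrix (Fin d) (Fin d) ℝ) : ℝ :=
  -(ρ1 * ∑ i, (mexp (u i + mlog (μ i)) - μ i).trace
    + ρ2 * ∑ j, (mexp (v j + mlog (ν j)) - ν j).trace
    + ε * ∑ i, ∑ j, (mexp (Kern c ρ1 ρ2 ε u v i j)).trace)


open scoped Matrix.Norms.L2Operator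

section Aux

variable {d : ℕ} {A B P Q : Matrix (Fin d) (Fin d) ℝ}

lemma mexp_isHermitian (hA : A.IsHermitian) : (mexp A).IsHermitian :=
  Matrix.IsHermitian.exp hA

lemma unitary_isUnit {V : Matrix (Fin d) (Fin d) ℝ} (hV : V ∈ Matrix.unitaryGroup (Fin d) ℝ) :
    IsUnit V :=
  ⟨⟨V, star V, Matrix.mem_unitaryGroup_iff.mp hV, Matrix.mem_unitaryGroup_iff'.mp hV⟩, rfl⟩

lemma mlog_eq_log (hA : A.IsHermitian) : mlog A = CFC.log A := by
  rw [mlog, dif_pos hA, CFC.log, hA.cfc_eq, Matrix.IsHermitian.cfc]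
  simp only [RCLike.ofReal_real_eq_id, Function.comp_def, id_eq]
  rfl

lemma mlog_mexp (hA : A.IsHermitian) : mlog (mexp A) = A := by
  rw [mlog_eq_log (mexp_isHermitian hA), mexp]
  exact CFC.log_exp A hA

lemma mexp_mlog (hP : P.PosDef) : mexp (mlog P) = P := by
  rw [mlog_eq_log hP.isHermitian, mexp]
  open scoped MatrixOrder in exact CFC.exp_log P (Matrix.isStrictlyPositive_iff_posDef.mpr hP)

lemma mlog_isHermitian (hA : A.IsHermitian) : (mlog A).IsHermitian := by
  rw [mlog_eq_log hA]
  exact (IsSelfAdjoint.log : IsSelfAdjoint (CFC.log A))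

lemma posDef_unitary_conj {V D : Matrix (Fin d) (Fin d) ℝ}
    (hV : V ∈ Matrix.unitaryGroup (Fin d) ℝ) (hD : D.PosDef) :
    (V * D * star V).PosDef := by
  exact hD.mul_mul_conjTranspose_same (Matrix.vecMul_injective_of_isUnit (unitary_isUnit hV))

lemma mexp_spectral (hA : A.IsHermitian) :
    mexp A = (hA.eigenvectorUnitary : Matrix (Fin d) (Fin d) ℝ)
      * Matrix.diagonal (Real.exp ∘ hA.eigenvalues)
      * star (hA.eigenvectorUnitary : Matrix (Fin d) (Fin d) ℝ) := by
  set U : Matrix (Fin d) (Fin d) ℝ := (hA.eigenvectorUnitary : Matrix (Fin d) (Fin d) ℝ) with hUdef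
  have hU : U ∈ Matrix.unitaryGroup (Fin d) ℝ := hA.eigenvectorUnitary.2
  have hinv : U⁻¹ = star U :=
    Matrix.inv_eq_right_inv (Matrix.mem_unitaryGroup_iff.mp hU)
  have h1 : A = U * Matrix.diagonal hA.eigenvalues * U⁻¹ := by
    rw [hinv]
    conv_lhs => rw [hA.spectral_theorem]
    congr 1
  have h2 := congrArg NormedSpace.exp h1
  rw [mexp, h2, Matrix.exp_conj U _ (unitary_isUnit hU), Matrix.exp_diagonal, hinv]
  rw [Pi.exp_def]
  simp only [Function.comp_def, ← Real.exp_eq_exp_ℝ]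

lemma mexp_posDef (hA : A.IsHermitian) : (mexp A).PosDef := by
  rw [mexp_spectral hA]
  exact posDef_unitary_conj hA.eigenvectorUnitary.2
    (Matrix.PosDef.diagonal fun i => Real.exp_pos _)

end Aux

section Klein

variable {d : ℕ} {A B : Matrix (Fin d) (Fin d) ℝ}

lemma trace_diag_conj (a b : Fin d → ℝ) (W : Matrix (Fin d) (Fin d) ℝ) :
    (Matrix.diagonal a * W * Matrix.diagonal b * Wᵀ).trace
      = ∑ k, ∑ l, a k * b l * (W k l)^2 := by
  rw [Matrix.trace]
  refine Finset.sum_congr rfl fun k _ => ?_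
  rw [Matrix.diag_apply, Matrix.mul_apply]
  refine Finset.sum_congr rfl fun l _ => ?_
  rw [Matrix.mul_diagonal, Matrix.diagonal_mul, Matrix.transpose_apply]
  ring

lemma trace_conj_pair {U V : Matrix (Fin d) (Fin d) ℝ}
    (hU : U ∈ Matrix.unitaryGroup (Fin d) ℝ) (hV : V ∈ Matrix.unitaryGroup (Fin d) ℝ)
    (a b : Fin d → ℝ) :
    ((U * Matrix.diagonal a * star U) * (V * Matrix.diagonal b * star V)).trace
      = ∑ k, ∑ l, a k * b l * ((star U * V) k l)^2 := by
  have hsVU : (star U * V)ᵀ = star V * U := by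
    rw [Matrix.star_eq_conjTranspose, Matrix.star_eq_conjTranspose,
      ← Matrix.conjTranspose_eq_transpose_of_trivial, Matrix.conjTranspose_mul,
      Matrix.conjTranspose_conjTranspose]
  have key : (U * Matrix.diagonal a * star U) * (V * Matrix.diagonal b * star V)
      = U * (Matrix.diagonal a * (star U * V) * Matrix.diagonal b * (star U * V)ᵀ) * star U := by
    rw [hsVU]
    simp only [Matrix.mul_assoc]
    rw [Matrix.mem_unitaryGroup_iff.mp hU, Matrix.mul_one]
  rw [key, Matrix.trace_mul_comm, ← Matrix.mul_assoc, Matrix.mem_unitaryGroup_iff'.mp hU,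
    Matrix.one_mul, trace_diag_conj]

lemma row_sq_sum {W : Matrix (Fin d) (Fin d) ℝ} (hW : W ∈ Matrix.unitaryGroup (Fin d) ℝ)
    (k : Fin d) : ∑ l, (W k l)^2 = 1 := by
  have h := Matrix.mem_unitaryGroup_iff.mp hW
  have h2 := congrFun (congrFun h k) k
  rw [Matrix.mul_apply] at h2
  simp only [Matrix.one_apply_eq] at h2
  rw [← h2]
  refine Finset.sum_congr rfl fun l _ => ?_
  rw [Matrix.star_eq_conjTranspose, Matrix.conjTranspose_apply]
  simp [sq]

lemma col_sq_sum {W : Matrix (Fin d) (Fin d) ℝ} (hW : W ∈ Matrix.unitaryGroup (Fin d) ℝ)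
    (l : Fin d) : ∑ k, (W k l)^2 = 1 := by
  have h := Matrix.mem_unitaryGroup_iff'.mp hW
  have h2 := congrFun (congrFun h l) l
  rw [Matrix.mul_apply] at h2
  simp only [Matrix.one_apply_eq] at h2
  rw [← h2]
  refine Finset.sum_congr rfl fun k _ => ?_
  rw [Matrix.star_eq_conjTranspose, Matrix.conjTranspose_apply]
  simp [sq]

/-- **Klein's inequality** (first-order convexity of `tr ∘ exp`). -/
lemma klein (hA : A.IsHermitian) (hB : B.IsHermitian) :
    (mexp A).trace + ((mexp A) * (B - A)).trace ≤ (mexp B).trace := by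
  set U : Matrix (Fin d) (Fin d) ℝ := (hA.eigenvectorUnitary : Matrix (Fin d) (Fin d) ℝ)
  set V : Matrix (Fin d) (Fin d) ℝ := (hB.eigenvectorUnitary : Matrix (Fin d) (Fin d) ℝ)
  have hU : U ∈ Matrix.unitaryGroup (Fin d) ℝ := hA.eigenvectorUnitary.2
  have hV : V ∈ Matrix.unitaryGroup (Fin d) ℝ := hB.eigenvectorUnitary.2
  set α := hA.eigenvalues
  set β := hB.eigenvalues
  set W : Matrix (Fin d) (Fin d) ℝ := star U * V with hWdef
  have hW : W ∈ Matrix.unitaryGroup (Fin d) ℝ :=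
    Submonoid.mul_mem _ (Unitary.star_mem hU) hV
  have hWU : (star U * U) = (1 : Matrix (Fin d) (Fin d) ℝ) := Matrix.mem_unitaryGroup_iff'.mp hU
  have hAspec : A = U * Matrix.diagonal α * star U := by
    conv_lhs => rw [hA.spectral_theorem]
    simp only [RCLike.ofReal_real_eq_id, Function.comp_def, id_eq]
    rfl
  have hBspec : B = V * Matrix.diagonal β * star V := by
    conv_lhs => rw [hB.spectral_theorem]
    simp only [RCLike.ofReal_real_eq_id, Function.comp_def, id_eq]
    rfl
  have hexpA := mexp_spectral hA
  have hexpB := mexp_spectral hB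
  -- the four traces
  have t2 : ((mexp A) * B).trace = ∑ k, ∑ l, Real.exp (α k) * β l * (W k l)^2 := by
    have hprod : (mexp A) * B
        = (U * Matrix.diagonal (Real.exp ∘ α) * star U) * (V * Matrix.diagonal β * star V) := by
      rw [← hexpA, ← hBspec]
    rw [hprod, trace_conj_pair hU hV _ _]
    simp only [Function.comp_apply]
    rfl
  have t1 : ((mexp A) * A).trace = ∑ k, ∑ l, Real.exp (α k) * α k * (W k l)^2 := by
    have hprod : (mexp A) * A
        = (U * Matrix.diagonal (Real.exp ∘ α) * star U) * (U * Matrix.diagonal α * star U) := by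
      rw [← hexpA, ← hAspec]
    rw [hprod, trace_conj_pair hU hU _ _]
    simp only [Function.comp_apply]
    refine Finset.sum_congr rfl fun k _ => ?_
    rw [hWU]
    calc ∑ l, Real.exp (α k) * α l * ((1:Matrix (Fin d) (Fin d) ℝ) k l)^2
        = Real.exp (α k) * α k := by
          rw [Finset.sum_eq_single k]
          · simp
          · intro l _ hl
            simp [Matrix.one_apply_ne (Ne.symm hl)]
          · simp
      _ = ∑ l, Real.exp (α k) * α k * (W k l)^2 := by
          rw [← Finset.mul_sum, row_sq_sum hW k, mul_one]
  have t3 : (mexp A).trace = ∑ k, ∑ l, Real.exp (α k) * (W k l)^2 := by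
    rw [hexpA, Matrix.trace_mul_comm, ← Matrix.mul_assoc, hWU, Matrix.one_mul,
      Matrix.trace_diagonal]
    refine Finset.sum_congr rfl fun k _ => ?_
    rw [← Finset.mul_sum, row_sq_sum hW k, mul_one]
    rfl
  have t4 : (mexp B).trace = ∑ k, ∑ l, Real.exp (β l) * (W k l)^2 := by
    rw [hexpB, Matrix.trace_mul_comm, ← Matrix.mul_assoc,
      Matrix.mem_unitaryGroup_iff'.mp hV, Matrix.one_mul, Matrix.trace_diagonal]
    rw [Finset.sum_comm]
    refine Finset.sum_congr rfl fun l _ => ?_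
    rw [← Finset.mul_sum, col_sq_sum hW l, mul_one]
    rfl
  have expand : ((mexp A) * (B - A)).trace = ((mexp A) * B).trace - ((mexp A) * A).trace := by
    rw [Matrix.mul_sub, Matrix.trace_sub]
  rw [expand, t1, t2, t3, t4]
  simp only [← Finset.sum_sub_distrib, ← Finset.sum_add_distrib]
  refine Finset.sum_le_sum fun k _ => Finset.sum_le_sum fun l _ => ?_
  have h1 := Real.add_one_le_exp (β l - α k)
  have h2 : (0:ℝ) < Real.exp (α k) := Real.exp_pos _
  have h3 : (0:ℝ) ≤ (W k l)^2 := sq_nonneg _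
  have h4 : Real.exp (α k) * Real.exp (β l - α k) = Real.exp (β l) := by
    rw [← Real.exp_add]; ring_nf
  nlinarith [mul_le_mul_of_nonneg_left h1 h2.le,
    mul_le_mul_of_nonneg_right (mul_le_mul_of_nonneg_left h1 h2.le) h3]

end Klein

section Cor

variable {d : ℕ} {A B P Q h : Matrix (Fin d) (Fin d) ℝ}

lemma isHermitian_smul_real (hA : A.IsHermitian) (s : ℝ) : (s • A).IsHermitian := by
  show (s • A)ᴴ = s • A
  rw [Matrix.conjTranspose_smul, hA, star_trivial]

lemma klein_diff {Y W' : Matrix (Fin d) (Fin d) ℝ} (hY : Y.IsHermitian) (hW : W'.IsHermitian)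
    (s : ℝ) :
    (mexp (Y + s • W')).trace - (mexp Y).trace ≤ s * ((mexp (Y + s • W')) * W').trace := by
  have h1 := klein (hY.add (isHermitian_smul_real hW s)) hY
  have h2 : Y - (Y + s • W') = -(s • W') := by abel
  rw [h2, Matrix.mul_neg, Matrix.trace_neg, Matrix.mul_smul, Matrix.trace_smul,
    smul_eq_mul] at h1
  linarith

lemma qKL_nonneg (hP : P.PosDef) (hQ : Q.PosDef) : 0 ≤ qKL P Q := by
  have hA : (mlog P).IsHermitian := mlog_isHermitian hP.isHermitian
  have hB : (mlog Q).IsHermitian := mlog_isHermitian hQ.isHermitian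
  have h1 := klein hA hB
  rw [mexp_mlog hP, mexp_mlog hQ] at h1
  rw [qKL]
  rw [Matrix.trace_add, Matrix.trace_sub, Matrix.trace_sub]
  rw [Matrix.mul_sub, Matrix.trace_sub] at h1
  linarith

lemma trace_sq_pos (hh : h.IsHermitian) (hne : h ≠ 0) : 0 < (h * h).trace := by
  have hsym : ∀ k l, h l k = h k l := by
    intro k l
    conv_lhs => rw [← hh]
    simp [Matrix.conjTranspose_apply]
  have expand : (h * h).trace = ∑ k, ∑ l, (h k l)^2 := by
    rw [Matrix.trace]
    refine Finset.sum_congr rfl fun k _ => ?_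
    rw [Matrix.diag_apply, Matrix.mul_apply]
    refine Finset.sum_congr rfl fun l _ => ?_
    rw [hsym k l, sq]
  have hex : ∃ k l, h k l ≠ 0 := by
    by_contra hcon
    push_neg at hcon
    exact hne (by ext k l; simpa using hcon k l)
  obtain ⟨k, l, hkl⟩ := hex
  rw [expand]
  refine Finset.sum_pos' (fun k _ => Finset.sum_nonneg fun l _ => sq_nonneg _)
    ⟨k, Finset.mem_univ k, Finset.sum_pos' (fun l _ => sq_nonneg _)
      ⟨l, Finset.mem_univ l, by positivity⟩⟩

lemma cont_trace_mexp (Y Z h' : Matrix (Fin d) (Fin d) ℝ) :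
    Continuous fun t : ℝ => ((mexp (Y + t • Z)) * h').trace := by
  have h1 : Continuous fun t : ℝ => Y + t • Z :=
    continuous_const.add (continuous_id.smul continuous_const)
  have h2 : Continuous fun M : Matrix (Fin d) (Fin d) ℝ => NormedSpace.exp M := by
    letI : NormedAlgebra ℚ (Matrix (Fin d) (Fin d) ℝ) := NormedAlgebra.restrictScalars ℚ ℝ _
    exact NormedSpace.exp_continuous
  have h3 : Continuous fun M : Matrix (Fin d) (Fin d) ℝ => (M * h').trace := by
    let f : Matrix (Fin d) (Fin d) ℝ →ₗ[ℝ] ℝ :=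
      (Matrix.traceLinearMap (Fin d) ℝ ℝ).comp (LinearMap.mulRight ℝ h')
    exact f.continuous_of_finiteDimensional
  exact h3.comp (h2.comp h1)

lemma isHermitian_sum {κ : Type*} (s : Finset κ) (f : κ → Matrix (Fin d) (Fin d) ℝ)
    (hf : ∀ k ∈ s, (f k).IsHermitian) : (∑ k ∈ s, f k).IsHermitian :=
  Finset.sum_induction f Matrix.IsHermitian (fun _ _ ha hb => ha.add hb)
    (Matrix.isHermitian_zero) hf

lemma posSemidef_sum {κ : Type*} (s : Finset κ) (f : κ → Matrix (Fin d) (Fin d) ℝ)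
    (hf : ∀ k ∈ s, (f k).PosSemidef) : (∑ k ∈ s, f k).PosSemidef :=
  Finset.sum_induction f Matrix.PosSemidef (fun _ _ ha hb => ha.add hb)
    Matrix.PosSemidef.zero hf

end Cor

section Stationarity

variable {d : ℕ} {I J : Type*} [Fintype I] [Fintype J]

lemma kern_isHermitian (c : I → J → Matrix (Fin d) (Fin d) ℝ) (hc : ∀ i j, (c i j).IsHermitian)
    (ρ1 ρ2 ε : ℝ) (u : I → Matrix (Fin d) (Fin d) ℝ) (v : J → Matrix (Fin d) (Fin d) ℝ)
    (hu : ∀ i, (u i).IsHermitian) (hv : ∀ j, (v j).IsHermitian) (i : I) (j : J) :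
    (Kern c ρ1 ρ2 ε u v i j).IsHermitian :=
  isHermitian_smul_real (((hc i j).add (isHermitian_smul_real (hu i) ρ1)).add
    (isHermitian_smul_real (hv j) ρ2)) _

lemma stationarity_u
    (c : I → J → Matrix (Fin d) (Fin d) ℝ) (hc : ∀ i j, (c i j).IsHermitian)
    (ρ1 ρ2 ε : ℝ) (hρ1 : 0 < ρ1) (hρ2 : 0 < ρ2) (hε : 0 < ε)
    (μ : I → Matrix (Fin d) (Fin d) ℝ) (ν : J → Matrix (Fin d) (Fin d) ℝ)
    (hμ : ∀ i, (μ i).PosDef)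
    (u : I → Matrix (Fin d) (Fin d) ℝ) (v : J → Matrix (Fin d) (Fin d) ℝ)
    (hu : ∀ i, (u i).IsHermitian) (hv : ∀ j, (v j).IsHermitian)
    (hmax : ∀ (u' : I → Matrix (Fin d) (Fin d) ℝ) (v' : J → Matrix (Fin d) (Fin d) ℝ),
      (∀ i, (u' i).IsHermitian) → (∀ j, (v' j).IsHermitian) →
        dualF c μ ν ρ1 ρ2 ε u' v' ≤ dualF c μ ν ρ1 ρ2 ε u v) (i₀ : I) :
    ∑ j, mexp (Kern c ρ1 ρ2 ε u v i₀ j) = mexp (u i₀ + mlog (μ i₀)) := by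
  classical
  set X : Matrix (Fin d) (Fin d) ℝ := u i₀ + mlog (μ i₀) with hX
  have hXh : X.IsHermitian := (hu i₀).add (mlog_isHermitian (hμ i₀).isHermitian)
  have hKh : ∀ i j, (Kern c ρ1 ρ2 ε u v i j).IsHermitian :=
    kern_isHermitian c hc ρ1 ρ2 ε u v hu hv
  rw [← sub_eq_zero]
  set h : Matrix (Fin d) (Fin d) ℝ := (∑ j, mexp (Kern c ρ1 ρ2 ε u v i₀ j)) - mexp X with hh
  have hhh : h.IsHermitian :=
    (isHermitian_sum Finset.univ _ (fun j _ => mexp_isHermitian (hKh i₀ j))).sub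
      (mexp_isHermitian hXh)
  by_contra hne
  set Z : Matrix (Fin d) (Fin d) ℝ := (-(ε⁻¹ * ρ1)) • h with hZ
  have hZh : Z.IsHermitian := isHermitian_smul_real hhh _
  set g : ℝ → ℝ := fun t => ρ1 *
    ((∑ j, ((mexp (Kern c ρ1 ρ2 ε u v i₀ j + t • Z)) * h).trace)
      - ((mexp (X + t • h)) * h).trace) with hg
  have hgcont : Continuous g := by
    apply Continuous.mul continuous_const
    exact (continuous_finset_sum _ fun j _ => cont_trace_mexp _ _ _).sub (cont_trace_mexp _ _ _)
  have hg0 : g 0 = ρ1 * (h * h).trace := by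
    have e1 : ∑ j, ((mexp (Kern c ρ1 ρ2 ε u v i₀ j + (0:ℝ) • Z)) * h).trace
        = ((∑ j, mexp (Kern c ρ1 ρ2 ε u v i₀ j)) * h).trace := by
      rw [Matrix.sum_mul, Matrix.trace_sum]
      exact Finset.sum_congr rfl fun j _ => by rw [zero_smul, add_zero]
    show ρ1 * ((∑ j, ((mexp (Kern c ρ1 ρ2 ε u v i₀ j + (0:ℝ) • Z)) * h).trace)
        - ((mexp (X + (0:ℝ) • h)) * h).trace) = ρ1 * (h * h).trace
    rw [e1, zero_smul, add_zero, ← Matrix.trace_sub, ← Matrix.sub_mul, ← hh]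
  have hpos : 0 < g 0 := by
    rw [hg0]
    exact mul_pos hρ1 (trace_sq_pos hhh hne)
  have hev : ∀ᶠ t in nhds (0:ℝ), 0 < g t :=
    (hgcont.continuousAt (x := 0)).eventually (eventually_gt_nhds hpos)
  obtain ⟨δ, hδpos, hball⟩ := Metric.eventually_nhds_iff.mp hev
  set t : ℝ := δ / 2 with htdef
  have ht0 : 0 < t := by positivity
  have hgt : 0 < g t := by
    apply hball
    rw [Real.dist_eq, sub_zero, abs_of_pos ht0]
    linarith
  set u' : I → Matrix (Fin d) (Fin d) ℝ := Function.update u i₀ (u i₀ + t • h) with hu'def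
  have hu' : ∀ i, (u' i).IsHermitian := by
    intro i
    rcases eq_or_ne i i₀ with rfl | hi
    · rw [hu'def, Function.update_self]
      exact (hu i).add (isHermitian_smul_real hhh t)
    · rw [hu'def, Function.update_of_ne hi]
      exact hu i
  have hle := hmax u' v hu' hv
  -- key quantities
  set a : ℝ := (mexp X).trace
  set a' : ℝ := (mexp (X + t • h)).trace
  set b : J → ℝ := fun j => (mexp (Kern c ρ1 ρ2 ε u v i₀ j)).trace with hb
  set b' : J → ℝ := fun j => (mexp (Kern c ρ1 ρ2 ε u v i₀ j + t • Z)).trace with hb'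
  set p : ℝ := ((mexp (X + t • h)) * h).trace
  set q : J → ℝ := fun j => ((mexp (Kern c ρ1 ρ2 ε u v i₀ j + t • Z)) * h).trace with hq
  -- Kern after update
  have hKern' : ∀ j, Kern c ρ1 ρ2 ε u' v i₀ j = Kern c ρ1 ρ2 ε u v i₀ j + t • Z := by
    intro j
    ext k l
    simp only [Kern, hu'def, Function.update_self, hZ, Matrix.add_apply, Matrix.smul_apply,
      smul_eq_mul]
    ring
  -- sum differences
  have hsum1 : ∑ i, (mexp (u' i + mlog (μ i)) - μ i).trace
      - ∑ i, (mexp (u i + mlog (μ i)) - μ i).trace = a' - a := by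
    rw [← Finset.sum_sub_distrib]
    rw [Finset.sum_eq_single i₀]
    · rw [hu'def, Function.update_self]
      have : u i₀ + t • h + mlog (μ i₀) = X + t • h := by rw [hX]; abel
      rw [this, Matrix.trace_sub, Matrix.trace_sub]
      ring
    · intro i _ hi
      rw [hu'def, Function.update_of_ne hi, sub_self]
    · intro habs
      exact absurd (Finset.mem_univ i₀) habs
  have hsum2 : ∑ i, ∑ j, (mexp (Kern c ρ1 ρ2 ε u' v i j)).trace
      - ∑ i, ∑ j, (mexp (Kern c ρ1 ρ2 ε u v i j)).trace = ∑ j, (b' j - b j) := by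
    rw [← Finset.sum_sub_distrib]
    rw [Finset.sum_eq_single i₀]
    · rw [← Finset.sum_sub_distrib]
      refine Finset.sum_congr rfl fun j _ => ?_
      rw [hKern' j]
    · intro i _ hi
      have : ∀ j, Kern c ρ1 ρ2 ε u' v i j = Kern c ρ1 ρ2 ε u v i j := by
        intro j
        simp only [Kern, hu'def, Function.update_of_ne hi]
      rw [Finset.sum_congr rfl fun j _ => by rw [this j], sub_self]
    · intro habs
      exact absurd (Finset.mem_univ i₀) habs
  -- Klein bounds
  have hbound1 : a' - a ≤ t * p := klein_diff hXh hhh t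
  have hbound2 : ∀ j, b' j - b j ≤ t * ((-(ε⁻¹ * ρ1)) * q j) := by
    intro j
    have h1 := klein_diff (hKh i₀ j) hZh t
    have e : mexp (Kern c ρ1 ρ2 ε u v i₀ j + t • Z) * Z
        = (-(ε⁻¹ * ρ1)) • (mexp (Kern c ρ1 ρ2 ε u v i₀ j + t • Z) * h) :=
      Matrix.mul_smul _ _ _
    rw [e, Matrix.trace_smul, smul_eq_mul] at h1
    exact h1
  have hsumbound : ∑ j, (b' j - b j) ≤ t * ((-(ε⁻¹ * ρ1)) * ∑ j, q j) := by
    calc ∑ j, (b' j - b j) ≤ ∑ j, t * ((-(ε⁻¹ * ρ1)) * q j) :=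
          Finset.sum_le_sum fun j _ => hbound2 j
      _ = t * ((-(ε⁻¹ * ρ1)) * ∑ j, q j) := by rw [Finset.mul_sum, Finset.mul_sum]
  -- dual difference
  have hdiff : dualF c μ ν ρ1 ρ2 ε u' v - dualF c μ ν ρ1 ρ2 ε u v
      = -(ρ1 * (a' - a)) - ε * (∑ j, (b' j - b j)) := by
    rw [dualF, dualF]
    have e1 : ∑ i, (mexp (u' i + mlog (μ i)) - μ i).trace
        = (a' - a) + ∑ i, (mexp (u i + mlog (μ i)) - μ i).trace := by linarith [hsum1]
    have e2 : ∑ i, ∑ j, (mexp (Kern c ρ1 ρ2 ε u' v i j)).trace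
        = (∑ j, (b' j - b j)) + ∑ i, ∑ j, (mexp (Kern c ρ1 ρ2 ε u v i j)).trace := by
      linarith [hsum2]
    rw [e1, e2]
    ring
  have hgt' : 0 < ρ1 * ((∑ j, q j) - p) := by
    have he : g t = ρ1 * ((∑ j, q j) - p) := rfl
    rwa [he] at hgt
  have h3 : ε * (t * ((-(ε⁻¹ * ρ1)) * ∑ j, q j)) = -(t * (ρ1 * ∑ j, q j)) := by
    field_simp
  have hA := mul_le_mul_of_nonneg_left hbound1 hρ1.le
  have hB := mul_le_mul_of_nonneg_left hsumbound hε.le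
  nlinarith [hA, hB, h3, hdiff, hle, mul_pos ht0 hgt']

lemma stationarity_v
    (c : I → J → Matrix (Fin d) (Fin d) ℝ) (hc : ∀ i j, (c i j).IsHermitian)
    (ρ1 ρ2 ε : ℝ) (hρ1 : 0 < ρ1) (hρ2 : 0 < ρ2) (hε : 0 < ε)
    (μ : I → Matrix (Fin d) (Fin d) ℝ) (ν : J → Matrix (Fin d) (Fin d) ℝ)
    (hν : ∀ j, (ν j).PosDef)
    (u : I → Matrix (Fin d) (Fin d) ℝ) (v : J → Matrix (Fin d) (Fin d) ℝ)
    (hu : ∀ i, (u i).IsHermitian) (hv : ∀ j, (v j).IsHermitian)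
    (hmax : ∀ (u' : I → Matrix (Fin d) (Fin d) ℝ) (v' : J → Matrix (Fin d) (Fin d) ℝ),
      (∀ i, (u' i).IsHermitian) → (∀ j, (v' j).IsHermitian) →
        dualF c μ ν ρ1 ρ2 ε u' v' ≤ dualF c μ ν ρ1 ρ2 ε u v) (j₀ : J) :
    ∑ i, mexp (Kern c ρ1 ρ2 ε u v i j₀) = mexp (v j₀ + mlog (ν j₀)) := by
  classical
  set X : Matrix (Fin d) (Fin d) ℝ := v j₀ + mlog (ν j₀) with hX
  have hXh : X.IsHermitian := (hv j₀).add (mlog_isHermitian (hν j₀).isHermitian)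
  have hKh : ∀ i j, (Kern c ρ1 ρ2 ε u v i j).IsHermitian :=
    kern_isHermitian c hc ρ1 ρ2 ε u v hu hv
  rw [← sub_eq_zero]
  set h : Matrix (Fin d) (Fin d) ℝ := (∑ i, mexp (Kern c ρ1 ρ2 ε u v i j₀)) - mexp X with hh
  have hhh : h.IsHermitian :=
    (isHermitian_sum Finset.univ _ (fun i _ => mexp_isHermitian (hKh i j₀))).sub
      (mexp_isHermitian hXh)
  by_contra hne
  set Z : Matrix (Fin d) (Fin d) ℝ := (-(ε⁻¹ * ρ2)) • h with hZ
  have hZh : Z.IsHermitian := isHermitian_smul_real hhh _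
  set g : ℝ → ℝ := fun t => ρ2 *
    ((∑ i, ((mexp (Kern c ρ1 ρ2 ε u v i j₀ + t • Z)) * h).trace)
      - ((mexp (X + t • h)) * h).trace) with hg
  have hgcont : Continuous g := by
    apply Continuous.mul continuous_const
    exact (continuous_finset_sum _ fun i _ => cont_trace_mexp _ _ _).sub (cont_trace_mexp _ _ _)
  have hg0 : g 0 = ρ2 * (h * h).trace := by
    have e1 : ∑ i, ((mexp (Kern c ρ1 ρ2 ε u v i j₀ + (0:ℝ) • Z)) * h).trace
        = ((∑ i, mexp (Kern c ρ1 ρ2 ε u v i j₀)) * h).trace := by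
      rw [Matrix.sum_mul, Matrix.trace_sum]
      exact Finset.sum_congr rfl fun i _ => by rw [zero_smul, add_zero]
    show ρ2 * ((∑ i, ((mexp (Kern c ρ1 ρ2 ε u v i j₀ + (0:ℝ) • Z)) * h).trace)
        - ((mexp (X + (0:ℝ) • h)) * h).trace) = ρ2 * (h * h).trace
    rw [e1, zero_smul, add_zero, ← Matrix.trace_sub, ← Matrix.sub_mul, ← hh]
  have hpos : 0 < g 0 := by
    rw [hg0]
    exact mul_pos hρ2 (trace_sq_pos hhh hne)
  have hev : ∀ᶠ t in nhds (0:ℝ), 0 < g t :=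
    (hgcont.continuousAt (x := 0)).eventually (eventually_gt_nhds hpos)
  obtain ⟨δ, hδpos, hball⟩ := Metric.eventually_nhds_iff.mp hev
  set t : ℝ := δ / 2 with htdef
  have ht0 : 0 < t := by positivity
  have hgt : 0 < g t := by
    apply hball
    rw [Real.dist_eq, sub_zero, abs_of_pos ht0]
    linarith
  set v' : J → Matrix (Fin d) (Fin d) ℝ := Function.update v j₀ (v j₀ + t • h) with hv'def
  have hv' : ∀ j, (v' j).IsHermitian := by
    intro j
    rcases eq_or_ne j j₀ with rfl | hj
    · rw [hv'def, Function.update_self]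
      exact (hv j).add (isHermitian_smul_real hhh t)
    · rw [hv'def, Function.update_of_ne hj]
      exact hv j
  have hle := hmax u v' hu hv'
  set a : ℝ := (mexp X).trace
  set a' : ℝ := (mexp (X + t • h)).trace
  set b : I → ℝ := fun i => (mexp (Kern c ρ1 ρ2 ε u v i j₀)).trace with hb
  set b' : I → ℝ := fun i => (mexp (Kern c ρ1 ρ2 ε u v i j₀ + t • Z)).trace with hb'
  set p : ℝ := ((mexp (X + t • h)) * h).trace
  set q : I → ℝ := fun i => ((mexp (Kern c ρ1 ρ2 ε u v i j₀ + t • Z)) * h).trace with hq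
  have hKern' : ∀ i, Kern c ρ1 ρ2 ε u v' i j₀ = Kern c ρ1 ρ2 ε u v i j₀ + t • Z := by
    intro i
    ext k l
    simp only [Kern, hv'def, Function.update_self, hZ, Matrix.add_apply, Matrix.smul_apply,
      smul_eq_mul]
    ring
  have hsum1 : ∑ j, (mexp (v' j + mlog (ν j)) - ν j).trace
      - ∑ j, (mexp (v j + mlog (ν j)) - ν j).trace = a' - a := by
    rw [← Finset.sum_sub_distrib]
    rw [Finset.sum_eq_single j₀]
    · rw [hv'def, Function.update_self]
      have : v j₀ + t • h + mlog (ν j₀) = X + t • h := by rw [hX]; abel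
      rw [this, Matrix.trace_sub, Matrix.trace_sub]
      ring
    · intro j _ hj
      rw [hv'def, Function.update_of_ne hj, sub_self]
    · intro habs
      exact absurd (Finset.mem_univ j₀) habs
  have hsum2 : ∑ i, ∑ j, (mexp (Kern c ρ1 ρ2 ε u v' i j)).trace
      - ∑ i, ∑ j, (mexp (Kern c ρ1 ρ2 ε u v i j)).trace = ∑ i, (b' i - b i) := by
    rw [show ∑ i, ∑ j, (mexp (Kern c ρ1 ρ2 ε u v' i j)).trace
        = ∑ j, ∑ i, (mexp (Kern c ρ1 ρ2 ε u v' i j)).trace from Finset.sum_comm,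
      show ∑ i, ∑ j, (mexp (Kern c ρ1 ρ2 ε u v i j)).trace
        = ∑ j, ∑ i, (mexp (Kern c ρ1 ρ2 ε u v i j)).trace from Finset.sum_comm]
    rw [← Finset.sum_sub_distrib]
    rw [Finset.sum_eq_single j₀]
    · rw [← Finset.sum_sub_distrib]
      refine Finset.sum_congr rfl fun i _ => ?_
      rw [hKern' i]
    · intro j _ hj
      have : ∀ i, Kern c ρ1 ρ2 ε u v' i j = Kern c ρ1 ρ2 ε u v i j := by
        intro i
        simp only [Kern, hv'def, Function.update_of_ne hj]
      rw [Finset.sum_congr rfl fun i _ => by rw [this i], sub_self]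
    · intro habs
      exact absurd (Finset.mem_univ j₀) habs
  have hbound1 : a' - a ≤ t * p := klein_diff hXh hhh t
  have hbound2 : ∀ i, b' i - b i ≤ t * ((-(ε⁻¹ * ρ2)) * q i) := by
    intro i
    have h1 := klein_diff (hKh i j₀) hZh t
    have e : mexp (Kern c ρ1 ρ2 ε u v i j₀ + t • Z) * Z
        = (-(ε⁻¹ * ρ2)) • (mexp (Kern c ρ1 ρ2 ε u v i j₀ + t • Z) * h) :=
      Matrix.mul_smul _ _ _
    rw [e, Matrix.trace_smul, smul_eq_mul] at h1
    exact h1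
  have hsumbound : ∑ i, (b' i - b i) ≤ t * ((-(ε⁻¹ * ρ2)) * ∑ i, q i) := by
    calc ∑ i, (b' i - b i) ≤ ∑ i, t * ((-(ε⁻¹ * ρ2)) * q i) :=
          Finset.sum_le_sum fun i _ => hbound2 i
      _ = t * ((-(ε⁻¹ * ρ2)) * ∑ i, q i) := by rw [Finset.mul_sum, Finset.mul_sum]
  have hdiff : dualF c μ ν ρ1 ρ2 ε u v' - dualF c μ ν ρ1 ρ2 ε u v
      = -(ρ2 * (a' - a)) - ε * (∑ i, (b' i - b i)) := by
    rw [dualF, dualF]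
    have e1 : ∑ j, (mexp (v' j + mlog (ν j)) - ν j).trace
        = (a' - a) + ∑ j, (mexp (v j + mlog (ν j)) - ν j).trace := by linarith [hsum1]
    have e2 : ∑ i, ∑ j, (mexp (Kern c ρ1 ρ2 ε u v' i j)).trace
        = (∑ i, (b' i - b i)) + ∑ i, ∑ j, (mexp (Kern c ρ1 ρ2 ε u v i j)).trace := by
      linarith [hsum2]
    rw [e1, e2]
    ring
  have hgt' : 0 < ρ2 * ((∑ i, q i) - p) := by
    have he : g t = ρ2 * ((∑ i, q i) - p) := rfl
    rwa [he] at hgt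
  have h3 : ε * (t * ((-(ε⁻¹ * ρ2)) * ∑ i, q i)) = -(t * (ρ2 * ∑ i, q i)) := by
    field_simp
  have hA := mul_le_mul_of_nonneg_left hbound1 hρ2.le
  have hB := mul_le_mul_of_nonneg_left hsumbound hε.le
  nlinarith [hA, hB, h3, hdiff, hle, mul_pos ht0 hgt']


end Stationarity

section Main

variable {d : ℕ} {I J : Type*} [Fintype I] [Fintype J]

lemma trace_mul_kern (c : I → J → Matrix (Fin d) (Fin d) ℝ) (ρ1 ρ2 : ℝ) {ε : ℝ} (hε : ε ≠ 0)
    (u : I → Matrix (Fin d) (Fin d) ℝ) (v : J → Matrix (Fin d) (Fin d) ℝ)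
    (P : Matrix (Fin d) (Fin d) ℝ) (i : I) (j : J) :
    ε * ((P * (Kern c ρ1 ρ2 ε u v i j)).trace)
      = -(((P * (c i j)).trace) + ρ1 * (P * u i).trace + ρ2 * (P * v j).trace) := by
  rw [Kern, Matrix.mul_smul, Matrix.trace_smul, smul_eq_mul, Matrix.mul_add, Matrix.mul_add,
    Matrix.trace_add, Matrix.trace_add, Matrix.mul_smul, Matrix.mul_smul, Matrix.trace_smul,
    Matrix.trace_smul, smul_eq_mul, smul_eq_mul]
  field_simp

lemma sum_trace_mul_right {κ : Type*} [Fintype κ] (f : κ → Matrix (Fin d) (Fin d) ℝ)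
    (W : Matrix (Fin d) (Fin d) ℝ) :
    ∑ k, ((f k) * W).trace = ((∑ k, f k) * W).trace := by
  rw [Matrix.sum_mul, Matrix.trace_sum]

end Main


/-- **Primal-dual optimality relation.** If `(u*, v*)` maximizes the dual functional
over collections of symmetric matrices, then `γ*_{ij} := exp(K(u*,v*)_{ij})` consists
of positive definite matrices and minimizes the primal objective over collections of
positive definite matrices. -/
theorem quantum_ot_primal_dual_optimality {d : ℕ} {I J : Type*} [Fintype I] [Fintype J]
    (c : I → J → Matrix (Fin d) (Fin d) ℝ) (hc : ∀ i j, (c i j).IsHermitian)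
    (ρ1 ρ2 ε : ℝ) (hρ1 : 0 < ρ1) (hρ2 : 0 < ρ2) (hε : 0 < ε)
    (μ : I → Matrix (Fin d) (Fin d) ℝ) (ν : J → Matrix (Fin d) (Fin d) ℝ)
    (hμ : ∀ i, (μ i).PosDef) (hν : ∀ j, (ν j).PosDef)
    (u : I → Matrix (Fin d) (Fin d) ℝ) (v : J → Matrix (Fin d) (Fin d) ℝ)
    (hu : ∀ i, (u i).IsHermitian) (hv : ∀ j, (v j).IsHermitian)
    (hmax : ∀ (u' : I → Matrix (Fin d) (Fin d) ℝ) (v' : J → Matrix (Fin d) (Fin d) ℝ),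
      (∀ i, (u' i).IsHermitian) → (∀ j, (v' j).IsHermitian) →
        dualF c μ ν ρ1 ρ2 ε u' v' ≤ dualF c μ ν ρ1 ρ2 ε u v) :
    (∀ i j, (mexp (Kern c ρ1 ρ2 ε u v i j)).PosDef) ∧
    ∀ γ : I → J → Matrix (Fin d) (Fin d) ℝ, (∀ i j, (γ i j).PosDef) →
      primal c μ ν ρ1 ρ2 ε (fun i j => mexp (Kern c ρ1 ρ2 ε u v i j))
        ≤ primal c μ ν ρ1 ρ2 ε γ := by
  classical
  have hKh : ∀ i j, (Kern c ρ1 ρ2 ε u v i j).IsHermitian :=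
    kern_isHermitian c hc ρ1 ρ2 ε u v hu hv
  refine ⟨fun i j => mexp_posDef (hKh i j), ?_⟩
  intro γ hγ
  obtain ⟨G, hGdef⟩ : ∃ G : I → J → Matrix (Fin d) (Fin d) ℝ,
      ∀ i j, G i j = mexp (Kern c ρ1 ρ2 ε u v i j) := ⟨_, fun i j => rfl⟩
  obtain ⟨M, hMdef⟩ : ∃ M : I → Matrix (Fin d) (Fin d) ℝ,
      ∀ i, M i = mexp (u i + mlog (μ i)) := ⟨_, fun i => rfl⟩
  obtain ⟨N, hNdef⟩ : ∃ N : J → Matrix (Fin d) (Fin d) ℝ,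
      ∀ j, N j = mexp (v j + mlog (ν j)) := ⟨_, fun j => rfl⟩
  rw [show (fun i j => mexp (Kern c ρ1 ρ2 ε u v i j)) = G from
    funext fun i => funext fun j => (hGdef i j).symm]
  have hGpd : ∀ i j, (G i j).PosDef := fun i j => (hGdef i j) ▸ mexp_posDef (hKh i j)
  have hMpd : ∀ i, (M i).PosDef := fun i =>
    (hMdef i) ▸ mexp_posDef ((hu i).add (mlog_isHermitian (hμ i).isHermitian))
  have hNpd : ∀ j, (N j).PosDef := fun j =>
    (hNdef j) ▸ mexp_posDef ((hv j).add (mlog_isHermitian (hν j).isHermitian))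
  have hmlogG : ∀ i j, mlog (G i j) = Kern c ρ1 ρ2 ε u v i j := fun i j =>
    (hGdef i j) ▸ mlog_mexp (hKh i j)
  have hmlogM : ∀ i, mlog (M i) = u i + mlog (μ i) := fun i =>
    (hMdef i) ▸ mlog_mexp ((hu i).add (mlog_isHermitian (hμ i).isHermitian))
  have hmlogN : ∀ j, mlog (N j) = v j + mlog (ν j) := fun j =>
    (hNdef j) ▸ mlog_mexp ((hv j).add (mlog_isHermitian (hν j).isHermitian))
  have stat1 : ∀ i, ∑ j, G i j = M i := by
    intro i
    simp only [hGdef, hMdef]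
    exact stationarity_u c hc ρ1 ρ2 ε hρ1 hρ2 hε μ ν hμ u v hu hv hmax i
  have stat2 : ∀ j, ∑ i, G i j = N j := by
    intro j
    simp only [hGdef, hNdef]
    exact stationarity_v c hc ρ1 ρ2 ε hρ1 hρ2 hε μ ν hν u v hu hv hmax j
  -- positive definiteness of the marginals of γ
  have hApd : ∀ i, (∑ j, γ i j).PosDef := by
    intro i
    rcases isEmpty_or_nonempty J with hJ | ⟨⟨j₀⟩⟩
    · have h1 : (∑ j, γ i j) = (0 : Matrix (Fin d) (Fin d) ℝ) := by
        simp [Finset.univ_eq_empty]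
      have h2 : (∑ j, G i j) = (0 : Matrix (Fin d) (Fin d) ℝ) := by
        simp [Finset.univ_eq_empty]
      rw [h1, ← h2, stat1 i]
      exact hMpd i
    · rw [← Finset.add_sum_erase _ _ (Finset.mem_univ j₀)]
      exact (hγ i j₀).add_posSemidef
        (posSemidef_sum _ _ fun j _ => (hγ i j).posSemidef)
  have hBpd : ∀ j, (∑ i, γ i j).PosDef := by
    intro j
    rcases isEmpty_or_nonempty I with hI | ⟨⟨i₀⟩⟩
    · have h1 : (∑ i, γ i j) = (0 : Matrix (Fin d) (Fin d) ℝ) := by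
        simp [Finset.univ_eq_empty]
      have h2 : (∑ i, G i j) = (0 : Matrix (Fin d) (Fin d) ℝ) := by
        simp [Finset.univ_eq_empty]
      rw [h1, ← h2, stat2 j]
      exact hNpd j
    · rw [← Finset.add_sum_erase _ _ (Finset.mem_univ i₀)]
      exact (hγ i₀ j).add_posSemidef
        (posSemidef_sum _ _ fun i _ => (hγ i j).posSemidef)
  -- expansion of primal
  have exp_primal : ∀ δ : I → J → Matrix (Fin d) (Fin d) ℝ,
      primal c μ ν ρ1 ρ2 ε δ
        = ((∑ i, ∑ j, ((δ i j) * (c i j)).trace)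
            + ε * (∑ i, ∑ j, ((δ i j) * mlog (δ i j)).trace)
            - ε * (∑ i, ∑ j, (δ i j).trace))
          + ρ1 * ∑ i, qKL (∑ j, δ i j) (μ i) + ρ2 * ∑ j, qKL (∑ i, δ i j) (ν j) := by
    intro δ
    rw [primal]
    have hc' : ∀ (i : I) (j : J), ((δ i j) * (c i j)ᵀ).trace = ((δ i j) * (c i j)).trace := by
      intro i j
      rw [← Matrix.conjTranspose_eq_transpose_of_trivial, hc i j]
    have hqH : ∀ (i : I) (j : J), qH (δ i j)
        = -(((δ i j) * mlog (δ i j)).trace - (δ i j).trace) := by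
      intro i j
      rw [qH, Matrix.trace_sub]
    simp only [hc', hqH]
    simp only [Finset.sum_neg_distrib, Finset.sum_sub_distrib, Finset.mul_sum]
    ring_nf
    simp only [Finset.mul_sum]
  -- pointwise entropy inequality for γ
  have key1 : ∀ i j, 0 ≤ ((γ i j) * (c i j)).trace + ε * ((γ i j) * mlog (γ i j)).trace
      - ε * (γ i j).trace + ρ1 * ((γ i j) * u i).trace + ρ2 * ((γ i j) * v j).trace
      + ε * (G i j).trace := by
    intro i j
    have h0 := qKL_nonneg (hγ i j) (hGpd i j)
    rw [qKL] at h0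
    simp only [Matrix.trace_add, Matrix.trace_sub] at h0
    have e := trace_mul_kern c ρ1 ρ2 hε.ne' u v (γ i j) i j
    rw [← hmlogG i j] at e
    nlinarith [mul_le_mul_of_nonneg_left h0 hε.le]
  have key1eq : ∀ i j, ((G i j) * (c i j)).trace + ε * ((G i j) * mlog (G i j)).trace
      - ε * (G i j).trace + ρ1 * ((G i j) * u i).trace + ρ2 * ((G i j) * v j).trace
      + ε * (G i j).trace = 0 := by
    intro i j
    have e := trace_mul_kern c ρ1 ρ2 hε.ne' u v (G i j) i j
    rw [← hmlogG i j] at e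
    linarith
  -- marginal inequalities
  have key2 : ∀ i, ((∑ j, γ i j) * u i).trace + (μ i).trace - (M i).trace
      ≤ qKL (∑ j, γ i j) (μ i) := by
    intro i
    have h0 := qKL_nonneg (hApd i) (hMpd i)
    rw [qKL, hmlogM i] at h0
    simp only [Matrix.mul_add, Matrix.trace_add, Matrix.trace_sub] at h0
    rw [qKL]
    simp only [Matrix.trace_add, Matrix.trace_sub]
    linarith
  have key3 : ∀ j, ((∑ i, γ i j) * v j).trace + (ν j).trace - (N j).trace
      ≤ qKL (∑ i, γ i j) (ν j) := by
    intro j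
    have h0 := qKL_nonneg (hBpd j) (hNpd j)
    rw [qKL, hmlogN j] at h0
    simp only [Matrix.mul_add, Matrix.trace_add, Matrix.trace_sub] at h0
    rw [qKL]
    simp only [Matrix.trace_add, Matrix.trace_sub]
    linarith
  have key2eq : ∀ i, qKL (M i) (μ i) = ((M i) * u i).trace + (μ i).trace - (M i).trace := by
    intro i
    rw [qKL, hmlogM i]
    simp only [Matrix.mul_add, Matrix.trace_add, Matrix.trace_sub]
    ring
  have key3eq : ∀ j, qKL (N j) (ν j) = ((N j) * v j).trace + (ν j).trace - (N j).trace := by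
    intro j
    rw [qKL, hmlogN j]
    simp only [Matrix.mul_add, Matrix.trace_add, Matrix.trace_sub]
    ring
  -- sum identities
  have sumUγ : ∑ i, ∑ j, ((γ i j) * u i).trace = ∑ i, ((∑ j, γ i j) * u i).trace :=
    Finset.sum_congr rfl fun i _ => sum_trace_mul_right _ _
  have sumVγ : ∑ i, ∑ j, ((γ i j) * v j).trace = ∑ j, ((∑ i, γ i j) * v j).trace := by
    rw [Finset.sum_comm]
    exact Finset.sum_congr rfl fun j _ => sum_trace_mul_right _ _
  have sumUG : ∑ i, ∑ j, ((G i j) * u i).trace = ∑ i, ((∑ j, G i j) * u i).trace :=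
    Finset.sum_congr rfl fun i _ => sum_trace_mul_right _ _
  have sumVG : ∑ i, ∑ j, ((G i j) * v j).trace = ∑ j, ((∑ i, G i j) * v j).trace := by
    rw [Finset.sum_comm]
    exact Finset.sum_congr rfl fun j _ => sum_trace_mul_right _ _
  -- summed entropy inequality
  have S1 : 0 ≤ (∑ i, ∑ j, ((γ i j) * (c i j)).trace)
      + ε * (∑ i, ∑ j, ((γ i j) * mlog (γ i j)).trace)
      - ε * (∑ i, ∑ j, (γ i j).trace)
      + ρ1 * (∑ i, ∑ j, ((γ i j) * u i).trace)
      + ρ2 * (∑ i, ∑ j, ((γ i j) * v j).trace)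
      + ε * (∑ i, ∑ j, (G i j).trace) := by
    have h0 : 0 ≤ ∑ i, ∑ j, (((γ i j) * (c i j)).trace + ε * ((γ i j) * mlog (γ i j)).trace
        - ε * (γ i j).trace + ρ1 * ((γ i j) * u i).trace + ρ2 * ((γ i j) * v j).trace
        + ε * (G i j).trace) :=
      Finset.sum_nonneg fun i _ => Finset.sum_nonneg fun j _ => key1 i j
    simp only [Finset.sum_add_distrib, Finset.sum_sub_distrib, ← Finset.mul_sum] at h0
    linarith
  have S1eq : (∑ i, ∑ j, ((G i j) * (c i j)).trace)
      + ε * (∑ i, ∑ j, ((G i j) * mlog (G i j)).trace)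
      - ε * (∑ i, ∑ j, (G i j).trace)
      + ρ1 * (∑ i, ∑ j, ((G i j) * u i).trace)
      + ρ2 * (∑ i, ∑ j, ((G i j) * v j).trace)
      + ε * (∑ i, ∑ j, (G i j).trace) = 0 := by
    have h0 : ∑ i, ∑ j, (((G i j) * (c i j)).trace + ε * ((G i j) * mlog (G i j)).trace
        - ε * (G i j).trace + ρ1 * ((G i j) * u i).trace + ρ2 * ((G i j) * v j).trace
        + ε * (G i j).trace) = 0 :=
      Finset.sum_eq_zero fun i _ => Finset.sum_eq_zero fun j _ => key1eq i j
    simp only [Finset.sum_add_distrib, Finset.sum_sub_distrib, ← Finset.mul_sum] at h0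
    linarith
  -- summed marginal inequalities (premultiplied)
  have S2 : ρ1 * ((∑ i, ((∑ j, γ i j) * u i).trace) + (∑ i, (μ i).trace)
      - (∑ i, (M i).trace)) ≤ ρ1 * ∑ i, qKL (∑ j, γ i j) (μ i) := by
    refine mul_le_mul_of_nonneg_left ?_ hρ1.le
    have h0 := Finset.sum_le_sum fun i (_ : i ∈ Finset.univ) => key2 i
    simp only [Finset.sum_add_distrib, Finset.sum_sub_distrib] at h0
    linarith
  have S3 : ρ2 * ((∑ j, ((∑ i, γ i j) * v j).trace) + (∑ j, (ν j).trace)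
      - (∑ j, (N j).trace)) ≤ ρ2 * ∑ j, qKL (∑ i, γ i j) (ν j) := by
    refine mul_le_mul_of_nonneg_left ?_ hρ2.le
    have h0 := Finset.sum_le_sum fun j (_ : j ∈ Finset.univ) => key3 j
    simp only [Finset.sum_add_distrib, Finset.sum_sub_distrib] at h0
    linarith
  have S2G : ∑ i, qKL (∑ j, G i j) (μ i) = (∑ i, ((∑ j, G i j) * u i).trace)
      + (∑ i, (μ i).trace) - (∑ i, (M i).trace) := by
    have h1 : ∀ i, qKL (∑ j, G i j) (μ i)
        = ((∑ j, G i j) * u i).trace + (μ i).trace - (M i).trace := by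
      intro i
      rw [stat1 i]
      exact key2eq i
    rw [Finset.sum_congr rfl fun i _ => h1 i]
    simp only [Finset.sum_add_distrib, Finset.sum_sub_distrib]
  have S3G : ∑ j, qKL (∑ i, G i j) (ν j) = (∑ j, ((∑ i, G i j) * v j).trace)
      + (∑ j, (ν j).trace) - (∑ j, (N j).trace) := by
    have h1 : ∀ j, qKL (∑ i, G i j) (ν j)
        = ((∑ i, G i j) * v j).trace + (ν j).trace - (N j).trace := by
      intro j
      rw [stat2 j]
      exact key3eq j
    rw [Finset.sum_congr rfl fun j _ => h1 j]
    simp only [Finset.sum_add_distrib, Finset.sum_sub_distrib]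
  -- conclusion
  rw [exp_primal γ, exp_primal G]
  have S2G' : ρ1 * ∑ i, qKL (∑ j, G i j) (μ i) = ρ1 * ((∑ i, ((∑ j, G i j) * u i).trace)
      + (∑ i, (μ i).trace) - (∑ i, (M i).trace)) := by rw [S2G]
  have S3G' : ρ2 * ∑ j, qKL (∑ i, G i j) (ν j) = ρ2 * ((∑ j, ((∑ i, G i j) * v j).trace)
      + (∑ j, (ν j).trace) - (∑ j, (N j).trace)) := by rw [S3G]
  nlinarith [S1, S1eq, S2, S3, S2G', S3G', sumUγ, sumVγ, sumUG, sumVG,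
    mul_le_mul_of_nonneg_left (le_of_eq sumUγ) hρ1.le,
    mul_le_mul_of_nonneg_left (le_of_eq sumVγ) hρ2.le,
    mul_le_mul_of_nonneg_left (le_of_eq sumUG) hρ1.le,
    mul_le_mul_of_nonneg_left (le_of_eq sumVG) hρ2.le]
end

section
/- Gradient of the trace-exponential: the map X ↦ tr(exp X) defined on real symmetric d×d matrices is differentiable, and its derivative at X in any symmetric direction V equals tr( exp(X) · V ) (even though X and V need not commute). -/
open Matrix

open scoped Nat
section Aux
attribute [local instance] Matrix.frobeniusNormedRing Matrix.frobeniusNormedAlgebra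

variable {d : ℕ}

@[reducible] noncomputable def frobTopAux (d : ℕ) : TopologicalSpace (Matrix (Fin d) (Fin d) ℝ) :=
  PseudoMetricSpace.toUniformSpace.toTopologicalSpace

@[reducible] noncomputable def frobACGAux (d : ℕ) : AddCommGroup (Matrix (Fin d) (Fin d) ℝ) :=
  Matrix.frobeniusNormedRing.toAddCommGroup

attribute [local instance] frobTopAux frobACGAux

noncomputable def trCLM (d : ℕ) : Matrix (Fin d) (Fin d) ℝ →L[ℝ] ℝ :=
  LinearMap.toContinuousLinearMap (Matrix.traceLinearMap (Fin d) ℝ ℝ)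

@[simp] lemma trCLM_apply (A : Matrix (Fin d) (Fin d) ℝ) : trCLM d A = A.trace := rfl

lemma hasFDerivAt_matpow (n : ℕ) (X : Matrix (Fin d) (Fin d) ℝ) :
    HasFDerivAt (fun A : Matrix (Fin d) (Fin d) ℝ => A ^ n)
      (∑ i ∈ Finset.range n,
        ContinuousLinearMap.mulLeftRight ℝ _ (X ^ i) (X ^ (n - 1 - i))) X := by
  induction n with
  | zero => simpa using hasFDerivAt_const (1 : Matrix (Fin d) (Fin d) ℝ) X
  | succ n ih =>
    have h := ih.mul' (hasFDerivAt_id X)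
    have hfun : (fun A : Matrix (Fin d) (Fin d) ℝ => A ^ (n+1))
        = fun y => y ^ n * y := by funext y; rw [pow_succ]
    rw [hfun]
    refine h.congr_fderiv (Eq.symm ?_)
    refine ContinuousLinearMap.ext fun V => ?_
    simp only [ContinuousLinearMap.sum_apply, ContinuousLinearMap.mulLeftRight_apply,
      ContinuousLinearMap.add_apply, ContinuousLinearMap.smul_apply,
      ContinuousLinearMap.smulRight_apply, ContinuousLinearMap.coe_id', id_eq,
      smul_eq_mul, op_smul_eq_mul, Nat.add_sub_cancel]
    rw [Finset.sum_range_succ, Nat.sub_self, pow_zero, mul_one, add_comm]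
    congr 1
    rw [Finset.sum_mul]
    refine Finset.sum_congr rfl fun i hi => ?_
    have hi' : i < n := Finset.mem_range.mp hi
    have e : n - i = (n - 1 - i) + 1 := by omega
    rw [e, pow_succ, ← mul_assoc]

lemma hasFDerivAt_trace_pow (n : ℕ) (X : Matrix (Fin d) (Fin d) ℝ) :
    HasFDerivAt (fun A : Matrix (Fin d) (Fin d) ℝ => (A ^ n).trace)
      ((n : ℝ) • ((trCLM d).comp (ContinuousLinearMap.mul ℝ _ (X ^ (n - 1))))) X := by
  have h := (trCLM d).hasFDerivAt.comp X (hasFDerivAt_matpow n X)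
  refine h.congr_fderiv (Eq.symm ?_)
  refine ContinuousLinearMap.ext fun V => ?_
  simp only [ContinuousLinearMap.smul_apply, ContinuousLinearMap.coe_comp', Function.comp_apply,
    ContinuousLinearMap.mul_apply', trCLM_apply, smul_eq_mul, ContinuousLinearMap.sum_apply,
    ContinuousLinearMap.mulLeftRight_apply, Matrix.trace_sum]
  have : ∀ i ∈ Finset.range n, (X ^ i * V * X ^ (n - 1 - i)).trace = (X ^ (n-1) * V).trace := by
    intro i hi
    have hi' : i < n := Finset.mem_range.mp hi
    rw [trace_mul_comm, ← mul_assoc, ← pow_add]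
    have : n - 1 - i + i = n - 1 := by omega
    rw [this]
  rw [Finset.sum_congr rfl this, Finset.sum_const, Finset.card_range, nsmul_eq_mul]


lemma norm_matpow_le_aux {d : ℕ} {A : Matrix (Fin d) (Fin d) ℝ} {R : ℝ} (hA : ‖A‖ ≤ R)
    (hR : 0 ≤ R) (k : ℕ) :
    ‖A ^ k‖ ≤ (1 + ‖(1 : Matrix (Fin d) (Fin d) ℝ)‖) * R ^ k := by
  induction k with
  | zero =>
    simp only [pow_zero, mul_one]
    linarith [norm_nonneg (1 : Matrix (Fin d) (Fin d) ℝ)]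
  | succ k ih =>
    calc ‖A ^ (k + 1)‖ = ‖A * A ^ k‖ := by rw [pow_succ']
      _ ≤ ‖A‖ * ‖A ^ k‖ := norm_mul_le _ _
      _ ≤ R * ((1 + ‖(1 : Matrix (Fin d) (Fin d) ℝ)‖) * R ^ k) :=
          mul_le_mul hA ih (norm_nonneg _) hR
      _ = (1 + ‖(1 : Matrix (Fin d) (Fin d) ℝ)‖) * R ^ (k + 1) := by ring

theorem trace_exp_hasFDeriv_aux {d : ℕ} (X : Matrix (Fin d) (Fin d) ℝ) (hX : X.IsHermitian) :
    ∃ f' : Matrix (Fin d) (Fin d) ℝ →L[ℝ] ℝ,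
      HasFDerivWithinAt (fun A : Matrix (Fin d) (Fin d) ℝ => (NormedSpace.exp A).trace) f'
        {A : Matrix (Fin d) (Fin d) ℝ | A.IsHermitian} X ∧
      ∀ V : Matrix (Fin d) (Fin d) ℝ, V.IsHermitian →
        f' V = (NormedSpace.exp X * V).trace := by
  classical
  let f : ℕ → (Matrix (Fin d) (Fin d) ℝ) → ℝ := fun n A => (n ! : ℝ)⁻¹ • (A ^ n).trace
  let f' : ℕ → (Matrix (Fin d) (Fin d) ℝ) → ((Matrix (Fin d) (Fin d) ℝ) →L[ℝ] ℝ) := fun n A =>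
    (n ! : ℝ)⁻¹ • ((n : ℝ) • ((trCLM d).comp (ContinuousLinearMap.mul ℝ (Matrix (Fin d) (Fin d) ℝ) (A ^ (n - 1)))))
  set R : ℝ := ‖X‖ + 1 with hRdef
  have hR0 : 0 < R := by positivity
  set C : ℝ := ‖trCLM d‖ * (1 + ‖(1 : (Matrix (Fin d) (Fin d) ℝ))‖) with hCdef
  have hC0 : 0 ≤ C := by positivity
  let u : ℕ → ℝ := fun n => C * ((n : ℝ) * R ^ (n - 1) / n !)
  have hXball : X ∈ Metric.ball (0 : (Matrix (Fin d) (Fin d) ℝ)) R :=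
    mem_ball_zero_iff.mpr (by rw [hRdef]; linarith)
  -- summability of the bound
  have hu : Summable u := by
    apply Summable.mul_left
    have key : ∀ n : ℕ, ((((n+1) : ℕ) : ℝ) * R ^ ((n+1) - 1) / (n+1)!) = R ^ n / n ! := by
      intro n
      have h1 : ((n+1)! : ℝ) = ((n : ℝ) + 1) * n ! := by
        rw [Nat.factorial_succ]; push_cast; ring
      have h2 : (n ! : ℝ) ≠ 0 := Nat.cast_ne_zero.mpr (Nat.factorial_ne_zero n)
      have h3 : ((n : ℝ) + 1) ≠ 0 := by positivity
      simp only [Nat.add_sub_cancel, h1]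
      push_cast
      field_simp
    refine (summable_nat_add_iff 1).mp ?_
    simpa only [key] using Real.summable_pow_div_factorial R
  -- derivatives of the terms
  have hfd : ∀ n : ℕ, ∀ A ∈ Metric.ball (0 : (Matrix (Fin d) (Fin d) ℝ)) R, HasFDerivAt (f n) (f' n A) A :=
    fun n A _ => (hasFDerivAt_trace_pow n A).const_smul (n ! : ℝ)⁻¹
  -- bound on the derivatives
  have hbound : ∀ n : ℕ, ∀ A ∈ Metric.ball (0 : (Matrix (Fin d) (Fin d) ℝ)) R, ‖f' n A‖ ≤ u n := by
    intro n A hA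
    have hAle : ‖A‖ ≤ R := le_of_lt (mem_ball_zero_iff.mp hA)
    have hun : 0 ≤ u n := by
      have : (0:ℝ) ≤ (n : ℝ) * R ^ (n - 1) / n ! := by positivity
      simpa [u] using mul_nonneg hC0 this
    refine ContinuousLinearMap.opNorm_le_bound _ hun fun V => ?_
    simp only [f', ContinuousLinearMap.smul_apply, ContinuousLinearMap.coe_comp',
      Function.comp_apply, ContinuousLinearMap.mul_apply', trCLM_apply, smul_eq_mul]
    rw [Real.norm_eq_abs, abs_mul, abs_mul,
      abs_of_nonneg (by positivity : (0:ℝ) ≤ (n ! : ℝ)⁻¹), Nat.abs_cast]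
    have h1 : |((A ^ (n - 1)) * V).trace| ≤ C * (R ^ (n - 1) * ‖V‖) := by
      have t1 : |((A ^ (n - 1)) * V).trace| ≤ ‖trCLM d‖ * ‖(A ^ (n - 1)) * V‖ := by
        simpa [Real.norm_eq_abs] using (trCLM d).le_opNorm ((A ^ (n - 1)) * V)
      have t2 : ‖(A ^ (n - 1)) * V‖ ≤ ‖A ^ (n - 1)‖ * ‖V‖ := norm_mul_le _ _
      have t3 : ‖A ^ (n - 1)‖ ≤ (1 + ‖(1 : (Matrix (Fin d) (Fin d) ℝ))‖) * R ^ (n - 1) :=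
        norm_matpow_le_aux hAle hR0.le _
      calc |((A ^ (n - 1)) * V).trace| ≤ ‖trCLM d‖ * (‖A ^ (n - 1)‖ * ‖V‖) :=
            t1.trans (mul_le_mul_of_nonneg_left t2 (norm_nonneg (trCLM d)))
        _ ≤ ‖trCLM d‖ * (((1 + ‖(1 : (Matrix (Fin d) (Fin d) ℝ))‖) * R ^ (n - 1)) * ‖V‖) :=
            mul_le_mul_of_nonneg_left
              (mul_le_mul_of_nonneg_right t3 (norm_nonneg _)) (norm_nonneg (trCLM d))
        _ = C * (R ^ (n - 1) * ‖V‖) := by rw [hCdef]; ring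
    calc (n ! : ℝ)⁻¹ * ((n : ℝ) * |((A ^ (n - 1)) * V).trace|)
        ≤ (n ! : ℝ)⁻¹ * ((n : ℝ) * (C * (R ^ (n - 1) * ‖V‖))) := by
          have h2 : (0:ℝ) ≤ (n ! : ℝ)⁻¹ := by positivity
          exact mul_le_mul_of_nonneg_left
            (mul_le_mul_of_nonneg_left h1 (Nat.cast_nonneg n)) h2
      _ = u n * ‖V‖ := by simp only [u]; field_simp
  -- summability at the base point
  have hsX : Summable fun n : ℕ => (n ! : ℝ)⁻¹ • X ^ n :=
    NormedSpace.expSeries_summable' (𝕂 := ℝ) X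
  have hf0 : Summable fun n => f n X := by
    have h := hsX.map (trCLM d).toLinearMap.toAddMonoidHom (trCLM d).continuous
    refine h.congr fun n => ?_
    simp [f, _root_.map_smul]
  -- the series derivative
  have hmain : HasFDerivAt (fun A : (Matrix (Fin d) (Fin d) ℝ) => ∑' n, f n A) (∑' n, f' n X) X :=
    hasFDerivAt_tsum_of_isPreconnected hu Metric.isOpen_ball
      (convex_ball (0 : (Matrix (Fin d) (Fin d) ℝ)) R).isPreconnected hfd hbound hXball hf0 hXball
  -- identify the function
  have hfun : (fun A : (Matrix (Fin d) (Fin d) ℝ) => (NormedSpace.exp A).trace) = fun A : (Matrix (Fin d) (Fin d) ℝ) => ∑' n, f n A := by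
    funext A
    have hsA : Summable fun n : ℕ => (n ! : ℝ)⁻¹ • A ^ n :=
      NormedSpace.expSeries_summable' (𝕂 := ℝ) A
    have h1 : (NormedSpace.exp A).trace = trCLM d (∑' n : ℕ, (n ! : ℝ)⁻¹ • A ^ n) := by
      rw [NormedSpace.exp_eq_tsum (𝕂 := ℝ)]; rfl
    rw [h1, (trCLM d).map_tsum hsA]
    simp [f]
  refine ⟨∑' n, f' n X, ?_, ?_⟩
  · have : HasFDerivAt (fun A : (Matrix (Fin d) (Fin d) ℝ) => (NormedSpace.exp A).trace) (∑' n, f' n X) X := by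
      rw [hfun]; exact hmain
    exact this.hasFDerivWithinAt
  · intro V _
    have hsum' : Summable fun n => f' n X :=
      Summable.of_norm_bounded (f := fun n => f' n X) hu (fun n => hbound n X hXball)
    have h1 : (∑' n, f' n X) V = ∑' n, (f' n X) V :=
      (ContinuousLinearMap.apply ℝ ℝ V).map_tsum hsum'
    have hg : Summable fun n => (f' n X) V := by
      have := hsum'.map (ContinuousLinearMap.apply ℝ ℝ V).toLinearMap.toAddMonoidHom
        (ContinuousLinearMap.apply ℝ ℝ V).continuous
      exact this
    have h2 : (NormedSpace.exp X * V).trace = ∑' n, (n ! : ℝ)⁻¹ * (X ^ n * V).trace := by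
      set T : (Matrix (Fin d) (Fin d) ℝ) →L[ℝ] ℝ :=
        (trCLM d).comp ((ContinuousLinearMap.mul ℝ (Matrix (Fin d) (Fin d) ℝ)).flip V) with hT
      have hTapp : ∀ W : (Matrix (Fin d) (Fin d) ℝ), T W = (W * V).trace := fun W => rfl
      have hexp : NormedSpace.exp X = ∑' n : ℕ, (n ! : ℝ)⁻¹ • X ^ n := by
        rw [NormedSpace.exp_eq_tsum (𝕂 := ℝ)]
      have : (NormedSpace.exp X * V).trace = T (∑' n : ℕ, (n ! : ℝ)⁻¹ • X ^ n) := by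
        rw [hexp]; exact (hTapp _).symm
      rw [this, T.map_tsum hsX]
      refine tsum_congr fun n => ?_
      rw [_root_.map_smul, hTapp]
      simp
    have h3 : ∑' n, (f' n X) V = ∑' n, (n ! : ℝ)⁻¹ * (X ^ n * V).trace := by
      rw [Summable.tsum_eq_zero_add hg]
      have h0 : (f' 0 X) V = 0 := by simp [f']
      rw [h0, zero_add]
      refine tsum_congr fun n => ?_
      have hfac : ((n+1)! : ℝ) = ((n : ℝ) + 1) * n ! := by
        rw [Nat.factorial_succ]; push_cast; ring
      have h2' : (n ! : ℝ) ≠ 0 := Nat.cast_ne_zero.mpr (Nat.factorial_ne_zero n)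
      have h3' : ((n : ℝ) + 1) ≠ 0 := by positivity
      simp only [f', ContinuousLinearMap.smul_apply, ContinuousLinearMap.coe_comp',
        Function.comp_apply, ContinuousLinearMap.mul_apply', trCLM_apply, smul_eq_mul,
        Nat.add_sub_cancel, hfac]
      push_cast
      field_simp
    rw [h1, h3, h2]

end Aux

attribute [local instance] Matrix.frobeniusNormedAddCommGroup Matrix.frobeniusNormedSpace

/-- **Gradient of the trace-exponential.** The map `X ↦ tr(exp X)`, defined on real
symmetric `d×d` matrices, is differentiable, and its derivative at `X` in any symmetric
direction `V` equals `tr(exp(X)·V)`. -/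
theorem trace_exp_hasFDeriv {d : ℕ} (X : Matrix (Fin d) (Fin d) ℝ) (hX : X.IsHermitian) :
    ∃ f' : Matrix (Fin d) (Fin d) ℝ →L[ℝ] ℝ,
      HasFDerivWithinAt (fun A : Matrix (Fin d) (Fin d) ℝ => (mexp A).trace) f'
        {A : Matrix (Fin d) (Fin d) ℝ | A.IsHermitian} X ∧
      ∀ V : Matrix (Fin d) (Fin d) ℝ, V.IsHermitian → f' V = (mexp X * V).trace :=
  trace_exp_hasFDeriv_aux X hX
end

section
/- Gradient of the negative quantum entropy: on the open set of positive definite symmetric d×d matrices, the map P ↦ tr(P log P − P) is differentiable, and its derivative at P in any symmetric direction V equals tr( log(P) · V ). -/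
open Matrix

attribute [local instance] Matrix.frobeniusNormedAddCommGroup Matrix.frobeniusNormedSpace

section Aux

variable {d : ℕ}

private lemma traceDMD (M : Matrix (Fin d) (Fin d) ℝ) (a b : Fin d → ℝ) :
    (diagonal a * M * diagonal b * star M).trace = ∑ i, ∑ j, a i * b j * (M i j)^2 := by
  simp only [Matrix.trace, Matrix.diag, Matrix.mul_apply, Matrix.diagonal_apply,
    Matrix.star_apply, star_trivial, ite_mul, zero_mul, mul_ite, mul_zero,
    Finset.sum_ite_eq, Finset.sum_ite_eq', Finset.mem_univ, if_true]
  refine Finset.sum_congr rfl fun i _ => Finset.sum_congr rfl fun j _ => by ring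

private lemma traceform (U V : Matrix (Fin d) (Fin d) ℝ) (a b : Fin d → ℝ) :
    ((U * diagonal a * star U) * (V * diagonal b * star V)).trace
      = ∑ i, ∑ j, a i * b j * ((star U * V) i j)^2 := by
  have h : (U * diagonal a * star U) * (V * diagonal b * star V)
      = U * (diagonal a * (star U * V) * diagonal b * star V) := by
    simp only [Matrix.mul_assoc]
  have h2 : (diagonal a * (star U * V) * diagonal b * star V) * U
      = diagonal a * (star U * V) * diagonal b * star (star U * V) := by
    simp only [Matrix.star_mul, star_star, Matrix.mul_assoc]
  rw [h, trace_mul_comm, h2, traceDMD]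

private lemma traceD (U : Matrix (Fin d) (Fin d) ℝ) (hU : star U * U = 1) (a : Fin d → ℝ) :
    (U * diagonal a * star U).trace = ∑ i, a i := by
  rw [trace_mul_cycle, hU, Matrix.one_mul, trace_diagonal]

private lemma traceform_diag (U : Matrix (Fin d) (Fin d) ℝ) (hU : star U * U = 1)
    (a b : Fin d → ℝ) :
    ((U * diagonal a * star U) * (U * diagonal b * star U)).trace = ∑ i, a i * b i := by
  rw [traceform, hU]
  simp [Matrix.one_apply, apply_ite, Finset.sum_ite_eq', mul_pow]

private lemma rowsum (U V : Matrix (Fin d) (Fin d) ℝ) (hU : star U * U = 1)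
    (hV : V * star V = 1) (i : Fin d) : ∑ j, ((star U * V) i j)^2 = 1 := by
  have h : (star U * V) * star (star U * V) = 1 := by
    rw [Matrix.star_mul, star_star, Matrix.mul_assoc, ← Matrix.mul_assoc V, hV,
      Matrix.one_mul, hU]
  have := congrFun (congrFun h i) i
  simpa [Matrix.mul_apply, Matrix.one_apply, Matrix.star_apply, pow_two, mul_comm]
    using this

private lemma colsum (U V : Matrix (Fin d) (Fin d) ℝ) (hU : U * star U = 1)
    (hV : star V * V = 1) (j : Fin d) : ∑ i, ((star U * V) i j)^2 = 1 := by
  have h : star (star U * V) * (star U * V) = 1 := by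
    rw [Matrix.star_mul, star_star, Matrix.mul_assoc, ← Matrix.mul_assoc U, hU,
      Matrix.one_mul, hV]
  have := congrFun (congrFun h j) j
  simpa [Matrix.mul_apply, Matrix.one_apply, Matrix.star_apply, pow_two, mul_comm]
    using this

private lemma scalar_nonneg {x y : ℝ} (hx : 0 < x) (hy : 0 < y) :
    0 ≤ y * Real.log y - y * Real.log x - y + x := by
  have h := Real.log_le_sub_one_of_pos (show 0 < x / y from div_pos hx hy)
  rw [Real.log_div hx.ne' hy.ne'] at h
  have h2 := mul_le_mul_of_nonneg_left h hy.le
  have hxy : y * (x / y - 1) = x - y := by field_simp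
  nlinarith

private lemma scalar_upper {x y : ℝ} (hx : 0 < x) (hy : 0 < y) :
    y * Real.log y - y * Real.log x - y + x ≤ (y - x)^2 / x := by
  have h := Real.log_le_sub_one_of_pos (show 0 < y / x from div_pos hy hx)
  rw [Real.log_div hy.ne' hx.ne'] at h
  have h2 := mul_le_mul_of_nonneg_left h hy.le
  rw [le_div_iff₀ hx]
  have hxy : y * (y / x - 1) * x = y * (y - x) := by field_simp
  nlinarith

private lemma normsq (A : Matrix (Fin d) (Fin d) ℝ) :
    ∑ i, ∑ j, (A i j)^2 = ‖A‖ * ‖A‖ := by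
  have h2 : ∀ a : ℝ, ‖a‖ ^ (2:ℝ) = a ^ 2 := fun a => by
    rw [show (2:ℝ) = ((2:ℕ):ℝ) by norm_num, Real.rpow_natCast, Real.norm_eq_abs, sq_abs]
  rw [frobenius_norm_def]
  simp only [h2]
  have h0 : (0:ℝ) ≤ ∑ i, ∑ j, A i j ^ 2 := by positivity
  rw [← Real.sqrt_eq_rpow, Real.mul_self_sqrt h0]

/-- Klein's inequality with a quadratic remainder bound. -/
private lemma key (P Q : Matrix (Fin d) (Fin d) ℝ)
    (hPh : P.IsHermitian) (hQh : Q.IsHermitian)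
    (hp : ∀ i, 0 < hPh.eigenvalues i) (hq : ∀ i, 0 < hQh.eigenvalues i) :
    0 ≤ (Q * mlog Q - Q).trace - (P * mlog P - P).trace - (mlog P * (Q - P)).trace ∧
    (Q * mlog Q - Q).trace - (P * mlog P - P).trace - (mlog P * (Q - P)).trace
      ≤ (∑ k, (hPh.eigenvalues k)⁻¹) * ∑ i, ∑ j, ((Q - P) i j)^2 := by
  classical
  set U : Matrix (Fin d) (Fin d) ℝ := (hPh.eigenvectorUnitary : Matrix (Fin d) (Fin d) ℝ)
    with hUdef
  set V : Matrix (Fin d) (Fin d) ℝ := (hQh.eigenvectorUnitary : Matrix (Fin d) (Fin d) ℝ)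
    with hVdef
  set p : Fin d → ℝ := hPh.eigenvalues with hpdef
  set q : Fin d → ℝ := hQh.eigenvalues with hqdef
  have hU1 : star U * U = 1 := hPh.eigenvectorUnitary.2.1
  have hU2 : U * star U = 1 := hPh.eigenvectorUnitary.2.2
  have hV1 : star V * V = 1 := hQh.eigenvectorUnitary.2.1
  have hV2 : V * star V = 1 := hQh.eigenvectorUnitary.2.2
  have hPspec : P = U * diagonal p * star U := by simpa using hPh.spectral_theorem
  have hQspec : Q = V * diagonal q * star V := by simpa using hQh.spectral_theorem
  have hlogP : mlog P = U * diagonal (fun i => Real.log (p i)) * star U := by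
    rw [mlog, dif_pos hPh]
  have hlogQ : mlog Q = V * diagonal (fun i => Real.log (q i)) * star V := by
    rw [mlog, dif_pos hQh]
  -- traces
  have T1 : (Q * mlog Q).trace = ∑ j, q j * Real.log (q j) := by
    conv_lhs => rw [hlogQ, hQspec]
    rw [traceform_diag V hV1]
  have T2 : Q.trace = ∑ j, q j := by
    conv_lhs => rw [hQspec]
    rw [traceD V hV1]
  have T3 : (P * mlog P).trace = ∑ i, p i * Real.log (p i) := by
    conv_lhs => rw [hlogP, hPspec]
    rw [traceform_diag U hU1]
  have T4 : P.trace = ∑ i, p i := by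
    conv_lhs => rw [hPspec]
    rw [traceD U hU1]
  have T5 : (mlog P * Q).trace
      = ∑ i, ∑ j, Real.log (p i) * q j * ((star U * V) i j)^2 := by
    conv_lhs => rw [hlogP, hQspec]
    rw [traceform]
  have T6 : (mlog P * P).trace = ∑ i, Real.log (p i) * p i := by
    conv_lhs => rw [hlogP, hPspec]
    rw [traceform_diag U hU1]
  have T7 : (Q * Q).trace = ∑ j, q j * q j := by
    conv_lhs => rw [hQspec]
    rw [traceform_diag V hV1]
  have T8 : (P * Q).trace = ∑ i, ∑ j, p i * q j * ((star U * V) i j)^2 := by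
    conv_lhs => rw [hPspec, hQspec]
    rw [traceform]
  have T9 : (P * P).trace = ∑ i, p i * p i := by
    conv_lhs => rw [hPspec]
    rw [traceform_diag U hU1]
  set c : Fin d → Fin d → ℝ := fun i j => ((star U * V) i j)^2 with hcdef
  have hc0 : ∀ i j, 0 ≤ c i j := fun i j => sq_nonneg _
  have hrow : ∀ i, ∑ j, c i j = 1 := rowsum U V hU1 hV2
  have hcol : ∀ j, ∑ i, c i j = 1 := colsum U V hU2 hV1
  have e1 : ∀ f : Fin d → ℝ, ∑ j, f j = ∑ i, ∑ j, c i j * f j := by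
    intro f
    rw [Finset.sum_comm]
    exact Finset.sum_congr rfl fun j _ => by rw [← Finset.sum_mul, hcol j, one_mul]
  have e2 : ∀ f : Fin d → ℝ, ∑ i, f i = ∑ i, ∑ j, c i j * f i := by
    intro f
    exact Finset.sum_congr rfl fun i _ => by rw [← Finset.sum_mul, hrow i, one_mul]
  -- the error term as a double sum
  have hE : (Q * mlog Q - Q).trace - (P * mlog P - P).trace - (mlog P * (Q - P)).trace
      = ∑ i, ∑ j, c i j * (q j * Real.log (q j) - q j * Real.log (p i) - q j + p i) := by
    rw [Matrix.trace_sub, Matrix.trace_sub, Matrix.mul_sub, Matrix.trace_sub,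
      T1, T2, T3, T4, T5, T6]
    rw [e1 (fun j => q j * Real.log (q j)), e1 q, e2 (fun i => p i * Real.log (p i)),
      e2 p, e2 (fun i => Real.log (p i) * p i)]
    simp only [← Finset.sum_sub_distrib, ← Finset.sum_add_distrib]
    exact Finset.sum_congr rfl fun i _ => Finset.sum_congr rfl fun j _ => by ring
  constructor
  · rw [hE]
    refine Finset.sum_nonneg fun i _ => Finset.sum_nonneg fun j _ =>
      mul_nonneg (hc0 i j) (scalar_nonneg (hp i) (hq j))
  · -- quadratic identity
    have split : ∑ i, ∑ j, c i j * (q j - p i)^2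
        = (∑ j, q j * q j) - 2 * (∑ i, ∑ j, p i * q j * c i j) + (∑ i, p i * p i) := by
      rw [e1 (fun j => q j * q j), e2 (fun i => p i * p i)]
      simp only [Finset.mul_sum, ← Finset.sum_sub_distrib, ← Finset.sum_add_distrib]
      exact Finset.sum_congr rfl fun i _ => Finset.sum_congr rfl fun j _ => by ring
    have hsym : ∀ i j, (Q - P) j i = (Q - P) i j := by
      intro i j
      have := (hQh.sub hPh).apply i j
      simpa using this
    have rtr : ((Q - P) * (Q - P)).trace = ∑ i, ∑ j, ((Q - P) i j)^2 := by
      simp only [Matrix.trace, Matrix.diag, Matrix.mul_apply]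
      exact Finset.sum_congr rfl fun i _ => Finset.sum_congr rfl fun j _ => by
        rw [hsym j i]; ring
    have expand2 : ((Q - P) * (Q - P)).trace
        = (Q*Q).trace - (P*Q).trace - (Q*P).trace + (P*P).trace := by
      simp only [Matrix.sub_mul, Matrix.mul_sub, Matrix.trace_sub]
      ring
    have hQP : (Q*P).trace = (P*Q).trace := trace_mul_comm Q P
    have hquad : ∑ i, ∑ j, c i j * (q j - p i)^2 = ∑ i, ∑ j, ((Q - P) i j)^2 := by
      rw [split, ← T7, ← T9, ← rtr, expand2, hQP, ← T8]; ring
    set C : ℝ := ∑ k, (p k)⁻¹ with hCdef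
    have hCle : ∀ i, (p i)⁻¹ ≤ C :=
      fun i => Finset.single_le_sum (fun k _ => inv_nonneg.2 (hp k).le) (Finset.mem_univ i)
    rw [hE, ← hquad, Finset.mul_sum]
    refine Finset.sum_le_sum fun i _ => ?_
    rw [Finset.mul_sum]
    refine Finset.sum_le_sum fun j _ => ?_
    have t1 := scalar_upper (hp i) (hq j)
    have t2 : (q j - p i)^2 / (p i) ≤ (q j - p i)^2 * C := by
      rw [div_eq_mul_inv]
      exact mul_le_mul_of_nonneg_left (hCle i) (sq_nonneg _)
    calc c i j * (q j * Real.log (q j) - q j * Real.log (p i) - q j + p i)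
        ≤ c i j * ((q j - p i)^2 * C) :=
          mul_le_mul_of_nonneg_left (t1.trans t2) (hc0 i j)
      _ = C * (c i j * (q j - p i)^2) := by ring

end Aux

/-- **Gradient of the negative quantum entropy.** On the open set of positive definite
symmetric matrices, the map `P ↦ tr(P log P - P)` is differentiable, and its derivative
at `P` in any symmetric direction `V` equals `tr(log(P)·V)`. -/
theorem negEntropy_hasFDeriv {d : ℕ} (P : Matrix (Fin d) (Fin d) ℝ) (hP : P.PosDef) :
    ∃ f' : Matrix (Fin d) (Fin d) ℝ →L[ℝ] ℝ,
      HasFDerivWithinAt (fun Q : Matrix (Fin d) (Fin d) ℝ => (Q * mlog Q - Q).trace) f'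
        {Q : Matrix (Fin d) (Fin d) ℝ | Q.PosDef} P ∧
      ∀ V : Matrix (Fin d) (Fin d) ℝ, V.IsHermitian → f' V = (mlog P * V).trace := by
  classical
  set L : Matrix (Fin d) (Fin d) ℝ →ₗ[ℝ] ℝ :=
    { toFun := fun V => (mlog P * V).trace
      map_add' := fun A B => by simp [Matrix.mul_add]
      map_smul' := fun r A => by simp [Matrix.mul_smul] } with hLdef
  refine ⟨LinearMap.toContinuousLinearMap L, ?_, fun V _ => rfl⟩
  set C : ℝ := ∑ k, (hP.1.eigenvalues k)⁻¹ with hCdef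
  set s : Set (Matrix (Fin d) (Fin d) ℝ) := {Q | Q.PosDef} with hsdef
  refine hasFDerivWithinAt_iff_isLittleO.2 ?_
  have big : (fun Q : Matrix (Fin d) (Fin d) ℝ =>
        (Q * mlog Q - Q).trace - (P * mlog P - P).trace
          - (LinearMap.toContinuousLinearMap L) (Q - P))
      =O[nhdsWithin P s] (fun Q => ‖Q - P‖ * ‖Q - P‖) := by
    rw [Asymptotics.isBigO_iff]
    refine ⟨C, ?_⟩
    filter_upwards [eventually_mem_nhdsWithin] with Q hQ
    have hL : (LinearMap.toContinuousLinearMap L) (Q - P) = (mlog P * (Q - P)).trace := rfl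
    rw [hL]
    obtain ⟨h0, h1⟩ := key P Q hP.1 hQ.1 hP.eigenvalues_pos hQ.eigenvalues_pos
    rw [normsq] at h1
    rw [Real.norm_of_nonneg h0, Real.norm_of_nonneg (by positivity)]
    exact h1
  have small : (fun Q : Matrix (Fin d) (Fin d) ℝ => ‖Q - P‖ * ‖Q - P‖)
      =o[nhdsWithin P s] (fun Q => Q - P) := by
    rw [Asymptotics.isLittleO_iff]
    intro ε hε
    have htend : Filter.Tendsto (fun Q : Matrix (Fin d) (Fin d) ℝ => ‖Q - P‖)
        (nhdsWithin P s) (nhds 0) := by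
      have h1 : Filter.Tendsto (fun Q : Matrix (Fin d) (Fin d) ℝ => ‖Q - P‖)
          (nhds P) (nhds ‖P - P‖) := ((continuous_id.sub continuous_const).norm.tendsto P)
      simpa using h1.mono_left nhdsWithin_le_nhds
    filter_upwards [htend.eventually (eventually_lt_nhds hε)] with Q hQ
    rw [Real.norm_of_nonneg (by positivity)]
    exact mul_le_mul_of_nonneg_right hQ.le (norm_nonneg _)
  exact big.trans_isLittleO small
end

section
/- Common eigenbasis reduction: suppose there is an orthogonal matrix U such that μ_i = U diag(a_i) Uᵀ and ν_j = U diag(b_j) Uᵀ for all i, j, where a_i, b_j ∈ ℝ^d have strictly positive entries, and c_{ij} = c̃_{ij}·Id with c̃_{ij} ∈ ℝ. Then W_ε(μ,ν) = Σ_{s=1}^d W̃_ε( (a_{i,s})_{i∈I}, (b_{j,s})_{j∈J} ): the quantum problem decomposes into d independent scalar entropic unbalanced optimal transport problems along each eigendirection, where W̃_ε(a,b) is the infimum over positive reals (g_{ij}) of Σ_{ij} g_{ij} c̃_{ij} + ρ1 Σ_i kl(Σ_j g_{ij} | a_i) + ρ2 Σ_j kl(Σ_i g_{ij} | b_j) +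 ε Σ_{ij} (g_{ij} log g_{ij} − g_{ij}), with kl(s|t) := s log(s/t) − s + t. -/
open Matrix

/-- Scalar relative entropy `kl(s|t) = s log(s/t) - s + t`. -/
noncomputable def skl (s t : ℝ) : ℝ := s * Real.log (s / t) - s + t

/-- Scalar entropic unbalanced optimal transport objective. -/
noncomputable def sObj {I J : Type*} [Fintype I] [Fintype J]
    (ct : I → J → ℝ) (a : I → ℝ) (b : J → ℝ) (ρ1 ρ2 ε : ℝ) (g : I → J → ℝ) : ℝ :=
  (∑ i, ∑ j, g i j * ct i j)
    + ρ1 * ∑ i, skl (∑ j, g i j) (a i)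
    + ρ2 * ∑ j, skl (∑ i, g i j) (b j)
    + ε * ∑ i, ∑ j, (g i j * Real.log (g i j) - g i j)

open Polynomial

variable {d : ℕ}

lemma orth_comm {U : Matrix (Fin d) (Fin d) ℝ} (hU : Uᵀ * U = 1) : U * Uᵀ = 1 :=
  mul_eq_one_comm.mp hU

/-- Conjugation by an orthogonal matrix as an algebra homomorphism. -/
noncomputable def conjAH (U : Matrix (Fin d) (Fin d) ℝ) (hU : Uᵀ * U = 1) :
    Matrix (Fin d) (Fin d) ℝ →ₐ[ℝ] Matrix (Fin d) (Fin d) ℝ where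
  toFun A := U * A * Uᵀ
  map_one' := by show U * 1 * Uᵀ = 1; rw [mul_one, orth_comm hU]
  map_mul' A B := by
    show U * (A * B) * Uᵀ = (U * A * Uᵀ) * (U * B * Uᵀ)
    have : U * (A * B) * Uᵀ = (U * A) * (Uᵀ * U) * (B * Uᵀ) := by
      rw [hU, mul_one]; noncomm_ring
    rw [this]; noncomm_ring
  map_zero' := by show U * 0 * Uᵀ = 0; simp
  map_add' A B := by show U * (A + B) * Uᵀ = U * A * Uᵀ + U * B * Uᵀ; rw [Matrix.mul_add, Matrix.add_mul]
  commutes' r := by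
    show U * algebraMap ℝ _ r * Uᵀ = algebraMap ℝ _ r
    simp only [Algebra.algebraMap_eq_smul_one, Matrix.mul_smul, Matrix.smul_mul, mul_one,
      orth_comm hU]

lemma aeval_conj (U : Matrix (Fin d) (Fin d) ℝ) (hU : Uᵀ * U = 1) (σ : Fin d → ℝ)
    (p : ℝ[X]) :
    aeval (U * diagonal σ * Uᵀ) p = U * diagonal (fun s => p.eval (σ s)) * Uᵀ := by
  have h1 : U * diagonal σ * Uᵀ = conjAH U hU (diagonalAlgHom ℝ σ) := rfl
  rw [h1, aeval_algHom_apply, aeval_algHom_apply]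
  have : (aeval σ p : Fin d → ℝ) = fun s => p.eval (σ s) := by
    funext s
    have h2 := aeval_algHom_apply (Pi.evalAlgHom ℝ (fun _ : Fin d => ℝ) s) σ p
    have h3 : Pi.evalAlgHom ℝ (fun _ : Fin d => ℝ) s σ = σ s := rfl
    rw [h3] at h2
    exact h2.symm.trans (by rw [coe_aeval_eq_eval])
  rw [this]
  rfl

lemma mlog_conj (U : Matrix (Fin d) (Fin d) ℝ) (hU : Uᵀ * U = 1) (σ : Fin d → ℝ) :
    mlog (U * diagonal σ * Uᵀ) = U * diagonal (fun s => Real.log (σ s)) * Uᵀ := by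
  classical
  have hA : (U * diagonal σ * Uᵀ).IsHermitian := by
    have h := isHermitian_mul_mul_conjTranspose U (isHermitian_diagonal (α := ℝ) σ)
    simpa [conjTranspose_eq_transpose_of_trivial] using h
  set V := (hA.eigenvectorUnitary : Matrix (Fin d) (Fin d) ℝ) with hVdef
  have hV2 : Vᵀ * V = 1 := by
    have := mem_unitaryGroup_iff'.mp hA.eigenvectorUnitary.2
    simpa [Matrix.star_eq_conjTranspose, conjTranspose_eq_transpose_of_trivial] using this
  have hspec : U * diagonal σ * Uᵀ = V * diagonal hA.eigenvalues * Vᵀ := by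
    have h := hA.spectral_theorem
    simpa [Matrix.star_eq_conjTranspose, conjTranspose_eq_transpose_of_trivial,
      Function.comp] using h
  set T : Finset ℝ := Finset.univ.image σ ∪ Finset.univ.image hA.eigenvalues with hT
  set p : ℝ[X] := Lagrange.interpolate T id Real.log with hpdef
  have hp : ∀ x ∈ T, p.eval x = Real.log x := fun x hx =>
    Lagrange.eval_interpolate_at_node Real.log (Set.injOn_id _) hx
  have hmem1 : ∀ s, σ s ∈ T := fun s => by
    simp only [hT, Finset.mem_union, Finset.mem_image, Finset.mem_univ, true_and]
    exact Or.inl ⟨s, rfl⟩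
  have hmem2 : ∀ i, hA.eigenvalues i ∈ T := fun i => by
    simp only [hT, Finset.mem_union, Finset.mem_image, Finset.mem_univ, true_and]
    exact Or.inr ⟨i, rfl⟩
  have e1 : mlog (U * diagonal σ * Uᵀ)
      = V * diagonal (fun i => Real.log (hA.eigenvalues i)) * Vᵀ := by
    unfold mlog
    rw [dif_pos hA]
    simp [Matrix.star_eq_conjTranspose, conjTranspose_eq_transpose_of_trivial, hVdef]
  have hfun1 : (fun i => p.eval (hA.eigenvalues i)) = fun i => Real.log (hA.eigenvalues i) :=
    funext fun i => hp _ (hmem2 i)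
  have hfun2 : (fun s => p.eval (σ s)) = fun s => Real.log (σ s) :=
    funext fun s => hp _ (hmem1 s)
  have e2 : aeval (U * diagonal σ * Uᵀ) p
      = V * diagonal (fun i => Real.log (hA.eigenvalues i)) * Vᵀ := by
    conv_lhs => rw [hspec]
    rw [aeval_conj V hV2 hA.eigenvalues p, hfun1]
  have e3 : aeval (U * diagonal σ * Uᵀ) p = U * diagonal (fun s => Real.log (σ s)) * Uᵀ := by
    rw [aeval_conj U hU σ p, hfun2]
  rw [e1, ← e2, e3]

lemma conj_mul_conj (U : Matrix (Fin d) (Fin d) ℝ) (hU : Uᵀ * U = 1) (p q : Fin d → ℝ) :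
    (U * diagonal p * Uᵀ) * (U * diagonal q * Uᵀ) = U * diagonal (fun s => p s * q s) * Uᵀ := by
  have : (U * diagonal p * Uᵀ) * (U * diagonal q * Uᵀ)
      = U * (diagonal p * (Uᵀ * U) * diagonal q) * Uᵀ := by noncomm_ring
  rw [this, hU, mul_one, diagonal_mul_diagonal]

lemma trace_conj (U : Matrix (Fin d) (Fin d) ℝ) (hU : Uᵀ * U = 1)
    (A : Matrix (Fin d) (Fin d) ℝ) : (U * A * Uᵀ).trace = A.trace := by
  rw [trace_mul_cycle, hU, one_mul]

lemma trace_conj_diag (U : Matrix (Fin d) (Fin d) ℝ) (hU : Uᵀ * U = 1) (x : Fin d → ℝ) :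
    (U * diagonal x * Uᵀ).trace = ∑ s, x s := by
  rw [trace_conj U hU, trace_diagonal]

lemma qKL_diag (U : Matrix (Fin d) (Fin d) ℝ) (hU : Uᵀ * U = 1) (p q : Fin d → ℝ)
    (hp : ∀ s, 0 < p s) (hq : ∀ s, 0 < q s) :
    qKL (U * diagonal p * Uᵀ) (U * diagonal q * Uᵀ) = ∑ s, skl (p s) (q s) := by
  unfold qKL
  rw [mlog_conj U hU p, mlog_conj U hU q, conj_mul_conj U hU, conj_mul_conj U hU]
  have : (U * diagonal (fun s => p s * Real.log (p s)) * Uᵀ)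
        - (U * diagonal (fun s => p s * Real.log (q s)) * Uᵀ)
        - (U * diagonal p * Uᵀ) + (U * diagonal q * Uᵀ)
      = U * diagonal (fun s => p s * Real.log (p s) - p s * Real.log (q s) - p s + q s) * Uᵀ := by
    have h1 : ∀ x y : Fin d → ℝ, U * diagonal x * Uᵀ + U * diagonal y * Uᵀ
        = U * diagonal (fun i => x i + y i) * Uᵀ := by
      intro x y
      rw [← diagonal_add, Matrix.mul_add, Matrix.add_mul]
    have h2 : ∀ x y : Fin d → ℝ, U * diagonal x * Uᵀ - U * diagonal y * Uᵀ
        = U * diagonal (fun i => x i - y i) * Uᵀ := by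
      intro x y
      rw [← diagonal_sub, Matrix.mul_sub, Matrix.sub_mul]
    rw [h2, h2, h1]
  rw [this, trace_conj_diag U hU]
  refine Finset.sum_congr rfl fun s _ => ?_
  unfold skl
  rw [Real.log_div (hp s).ne' (hq s).ne']
  ring

lemma qH_diag (U : Matrix (Fin d) (Fin d) ℝ) (hU : Uᵀ * U = 1) (p : Fin d → ℝ) :
    qH (U * diagonal p * Uᵀ) = -∑ s, (p s * Real.log (p s) - p s) := by
  unfold qH
  rw [mlog_conj U hU p, conj_mul_conj U hU]
  have : (U * diagonal (fun s => p s * Real.log (p s)) * Uᵀ) - (U * diagonal p * Uᵀ)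
      = U * diagonal (fun s => p s * Real.log (p s) - p s) * Uᵀ := by
    rw [← diagonal_sub, Matrix.mul_sub, Matrix.sub_mul]
  rw [this, trace_conj_diag U hU]

lemma sum_conj_diag {J : Type*} [Fintype J] (U : Matrix (Fin d) (Fin d) ℝ)
    (g : J → Fin d → ℝ) :
    ∑ j, U * diagonal (g j) * Uᵀ = U * diagonal (fun s => ∑ j, g j s) * Uᵀ := by
  rw [← Finset.sum_mul, ← Finset.mul_sum]
  congr 2
  ext s t
  simp only [Matrix.sum_apply, diagonal_apply]
  by_cases h : s = t <;> simp [h]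

lemma posdef_conj {P : Matrix (Fin d) (Fin d) ℝ} (hP : P.PosDef)
    (W : Matrix (Fin d) (Fin d) ℝ) (hW : Wᵀ * W = 1) : (Wᵀ * P * W).PosDef := by
  refine Matrix.PosDef.of_dotProduct_mulVec_pos ?_ ?_
  · have h := isHermitian_mul_mul_conjTranspose Wᵀ hP.1
    simpa [conjTranspose_eq_transpose_of_trivial] using h
  · intro x hx
    have hx' : W *ᵥ x ≠ 0 := by
      intro h
      apply hx
      have h2 := congrArg (fun y => Wᵀ *ᵥ y) h
      simpa [mulVec_mulVec, hW] using h2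
    have h2 := hP.dotProduct_mulVec_pos hx'
    have key : star x ⬝ᵥ (Wᵀ * P * W) *ᵥ x = star (W *ᵥ x) ⬝ᵥ P *ᵥ (W *ᵥ x) := by
      rw [← mulVec_mulVec, ← mulVec_mulVec]
      rw [show (star x : Fin d → ℝ) = x from rfl, show (star (W *ᵥ x) : Fin d → ℝ) = W *ᵥ x from rfl]
      rw [dotProduct_mulVec x Wᵀ, vecMul_transpose]
    rw [key]
    exact h2

lemma posdef_diag_entry_pos {P : Matrix (Fin d) (Fin d) ℝ} (hP : P.PosDef) (s : Fin d) :
    0 < P s s := by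
  have h := hP.dotProduct_mulVec_pos (x := Pi.single s 1) (by simp [Function.ne_iff])
  simpa [dotProduct, Pi.single_apply, mulVec] using h

lemma posdef_sum {J : Type*} [Fintype J] [Nonempty J] {γ : J → Matrix (Fin d) (Fin d) ℝ}
    (h : ∀ j, (γ j).PosDef) : (∑ j, γ j).PosDef := by
  refine Matrix.PosDef.of_dotProduct_mulVec_pos ?_ ?_
  · show (∑ j, γ j)ᴴ = ∑ j, γ j
    rw [conjTranspose_sum]
    exact Finset.sum_congr rfl fun j _ => (h j).1
  · intro x hx
    have hsum : (∑ j, γ j) *ᵥ x = ∑ j, γ j *ᵥ x := by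
      ext i
      simp only [mulVec, dotProduct, Matrix.sum_apply, Finset.sum_apply, Finset.sum_mul]
      rw [Finset.sum_comm]
    have hdot : star x ⬝ᵥ (∑ j, γ j *ᵥ x) = ∑ j, star x ⬝ᵥ (γ j *ᵥ x) := by
      simp only [dotProduct, Finset.sum_apply, Finset.mul_sum]
      rw [Finset.sum_comm]
    rw [hsum, hdot]
    exact Finset.sum_pos (fun j _ => (h j).dotProduct_mulVec_pos hx) Finset.univ_nonempty

lemma trace_mul_mlog_spectral {P : Matrix (Fin d) (Fin d) ℝ} (hP : P.PosDef) :
    (P * mlog P).trace = ∑ k, hP.1.eigenvalues k * Real.log (hP.1.eigenvalues k) := by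
  classical
  set V := (hP.1.eigenvectorUnitary : Matrix (Fin d) (Fin d) ℝ) with hVdef
  have hV2 : Vᵀ * V = 1 := by
    have := mem_unitaryGroup_iff'.mp hP.1.eigenvectorUnitary.2
    simpa [Matrix.star_eq_conjTranspose, conjTranspose_eq_transpose_of_trivial] using this
  have hspec : P = V * diagonal hP.1.eigenvalues * Vᵀ := by
    have h := hP.1.spectral_theorem
    simpa [Matrix.star_eq_conjTranspose, conjTranspose_eq_transpose_of_trivial,
      Function.comp] using h
  conv_lhs => rw [hspec]
  rw [mlog_conj V hV2, conj_mul_conj V hV2, trace_conj_diag V hV2]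

lemma sum_diag_mul_log_le_trace {P : Matrix (Fin d) (Fin d) ℝ} (hP : P.PosDef) :
    ∑ s, (P s s * Real.log (P s s)) ≤ (P * mlog P).trace := by
  classical
  set lam := hP.1.eigenvalues with hlam
  set V := (hP.1.eigenvectorUnitary : Matrix (Fin d) (Fin d) ℝ) with hVdef
  have hV2 : Vᵀ * V = 1 := by
    have := mem_unitaryGroup_iff'.mp hP.1.eigenvectorUnitary.2
    simpa [Matrix.star_eq_conjTranspose, conjTranspose_eq_transpose_of_trivial] using this
  have hV1 : V * Vᵀ = 1 := orth_comm hV2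
  have hspec : P = V * diagonal lam * Vᵀ := by
    have h := hP.1.spectral_theorem
    simpa [Matrix.star_eq_conjTranspose, conjTranspose_eq_transpose_of_trivial,
      Function.comp] using h
  have hPss : ∀ s, P s s = ∑ k, (V s k)^2 * lam k := by
    intro s
    conv_lhs => rw [hspec]
    simp only [Matrix.mul_apply, transpose_apply, diagonal_apply, mul_ite, mul_zero,
      ite_mul, zero_mul, Finset.sum_ite_eq, Finset.sum_ite_eq', Finset.mem_univ, if_true]
    refine Finset.sum_congr rfl fun k _ => ?_
    ring
  have hrow : ∀ s, ∑ k, (V s k)^2 = 1 := by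
    intro s
    have := congrFun (congrFun hV1 s) s
    simp only [Matrix.mul_apply, transpose_apply, one_apply_eq] at this
    rw [← this]
    exact Finset.sum_congr rfl fun k _ => (sq (V s k)).symm ▸ by ring
  have hcol : ∀ k, ∑ s, (V s k)^2 = 1 := by
    intro k
    have := congrFun (congrFun hV2 k) k
    simp only [Matrix.mul_apply, transpose_apply, one_apply_eq] at this
    rw [← this]
    exact Finset.sum_congr rfl fun s _ => by ring
  have hlam_nonneg : ∀ k, 0 ≤ lam k := fun k => (hP.eigenvalues_pos k).le
  have key : ∀ s, P s s * Real.log (P s s)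
      ≤ ∑ k, (V s k)^2 * (lam k * Real.log (lam k)) := by
    intro s
    have hJ := Real.convexOn_mul_log.map_sum_le (t := Finset.univ)
      (w := fun k => (V s k)^2) (p := lam)
      (fun k _ => sq_nonneg _) (hrow s) (fun k _ => hlam_nonneg k)
    simpa [smul_eq_mul, hPss s] using hJ
  calc ∑ s, P s s * Real.log (P s s)
      ≤ ∑ s, ∑ k, (V s k)^2 * (lam k * Real.log (lam k)) :=
        Finset.sum_le_sum fun s _ => key s
    _ = ∑ k, (∑ s, (V s k)^2) * (lam k * Real.log (lam k)) := by
        rw [Finset.sum_comm]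
        exact Finset.sum_congr rfl fun k _ => (Finset.sum_mul _ _ _).symm
    _ = ∑ k, lam k * Real.log (lam k) := by
        refine Finset.sum_congr rfl fun k _ => ?_
        rw [hcol k, one_mul]
    _ = (P * mlog P).trace := (trace_mul_mlog_spectral hP).symm

lemma skl_nonneg {s t : ℝ} (hs : 0 < s) (ht : 0 < t) : 0 ≤ skl s t := by
  unfold skl
  rw [Real.log_div hs.ne' ht.ne']
  have h := Real.log_le_sub_one_of_pos (div_pos ht hs)
  rw [Real.log_div ht.ne' hs.ne'] at h
  have hc : s * (t / s) = t := by field_simp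
  nlinarith [mul_le_mul_of_nonneg_left h hs.le]

lemma mul_log_lb {x : ℝ} (hx : 0 < x) (a : ℝ) :
    (a + 1) * x - Real.exp a ≤ x * Real.log x := by
  have h := Real.add_one_le_exp (a - Real.log x)
  have h2 := mul_le_mul_of_nonneg_left h hx.le
  rw [Real.exp_sub, Real.exp_log hx] at h2
  have hc : x * (Real.exp a / x) = Real.exp a := by field_simp
  nlinarith

lemma term_lb {x c ε : ℝ} (hx : 0 < x) (hε : 0 < ε) :
    -ε * Real.exp (-c/ε) ≤ x * c + ε * (x * Real.log x - x) := by
  have h := mul_log_lb hx (-c/ε)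
  have h2 := mul_le_mul_of_nonneg_left h hε.le
  have hc : ε * (-c/ε) = -c := by field_simp
  nlinarith [hc]

lemma sObj_lb {I J : Type*} [Fintype I] [Fintype J] [Nonempty I] [Nonempty J]
    (ct : I → J → ℝ) (a : I → ℝ) (b : J → ℝ) (ρ1 ρ2 ε : ℝ) (g : I → J → ℝ)
    (ha : ∀ i, 0 < a i) (hb : ∀ j, 0 < b j)
    (hρ1 : 0 < ρ1) (hρ2 : 0 < ρ2) (hε : 0 < ε) (hg : ∀ i j, 0 < g i j) :
    (∑ i, ∑ j, -ε * Real.exp (-(ct i j)/ε)) ≤ sObj ct a b ρ1 ρ2 ε g := by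
  unfold sObj
  have h1 : 0 ≤ ρ1 * ∑ i, skl (∑ j, g i j) (a i) :=
    mul_nonneg hρ1.le (Finset.sum_nonneg fun i _ =>
      skl_nonneg (Finset.sum_pos (fun j _ => hg i j) Finset.univ_nonempty) (ha i))
  have h2 : 0 ≤ ρ2 * ∑ j, skl (∑ i, g i j) (b j) :=
    mul_nonneg hρ2.le (Finset.sum_nonneg fun j _ =>
      skl_nonneg (Finset.sum_pos (fun i _ => hg i j) Finset.univ_nonempty) (hb j))
  have h3 : (∑ i, ∑ j, -ε * Real.exp (-(ct i j)/ε))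
      ≤ (∑ i, ∑ j, g i j * ct i j) + ε * ∑ i, ∑ j, (g i j * Real.log (g i j) - g i j) := by
    rw [Finset.mul_sum, ← Finset.sum_add_distrib]
    refine Finset.sum_le_sum fun i _ => ?_
    rw [Finset.mul_sum, ← Finset.sum_add_distrib]
    exact Finset.sum_le_sum fun j _ => term_lb (hg i j) hε
  linarith

lemma sum_rot {α β γ : Type*} [Fintype α] [Fintype β] [Fintype γ] (f : α → β → γ → ℝ) :
    (∑ a, ∑ b, ∑ c, f a b c) = ∑ c, ∑ a, ∑ b, f a b c := by
  have h1 : (∑ a, ∑ b, ∑ c, f a b c) = ∑ a, ∑ c, ∑ b, f a b c :=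
    Finset.sum_congr rfl fun a _ => Finset.sum_comm
  rw [h1]
  exact Finset.sum_comm

lemma primal_diag_eq {I J : Type*} [Fintype I] [Fintype J] [Nonempty I] [Nonempty J]
    (U : Matrix (Fin d) (Fin d) ℝ) (hU : Uᵀ * U = 1)
    (a : I → Fin d → ℝ) (b : J → Fin d → ℝ)
    (ha : ∀ i s, 0 < a i s) (hb : ∀ j s, 0 < b j s)
    (ct : I → J → ℝ) (ρ1 ρ2 ε : ℝ)
    (g : Fin d → I → J → ℝ) (hg : ∀ s i j, 0 < g s i j) :
    primal (fun i j => ct i j • 1)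
      (fun i => U * diagonal (a i) * Uᵀ) (fun j => U * diagonal (b j) * Uᵀ) ρ1 ρ2 ε
      (fun i j => U * diagonal (fun s => g s i j) * Uᵀ)
    = ∑ s, sObj ct (fun i => a i s) (fun j => b j s) ρ1 ρ2 ε (g s) := by
  unfold primal
  have h1 : (∑ i, ∑ j, ((U * diagonal (fun s => g s i j) * Uᵀ)
        * ((ct i j • (1 : Matrix (Fin d) (Fin d) ℝ)))ᵀ).trace)
      = ∑ i, ∑ j, ∑ s, g s i j * ct i j := by
    refine Finset.sum_congr rfl fun i _ => Finset.sum_congr rfl fun j _ => ?_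
    rw [transpose_smul, transpose_one, Matrix.mul_smul, mul_one, trace_smul, smul_eq_mul,
      trace_conj_diag U hU, Finset.mul_sum]
    exact Finset.sum_congr rfl fun s _ => mul_comm _ _
  have h2 : (∑ i, qKL (∑ j, U * diagonal (fun s => g s i j) * Uᵀ)
        (U * diagonal (a i) * Uᵀ))
      = ∑ i, ∑ s, skl (∑ j, g s i j) (a i s) := by
    refine Finset.sum_congr rfl fun i _ => ?_
    rw [sum_conj_diag U (fun j s => g s i j)]
    exact qKL_diag U hU _ _
      (fun s => Finset.sum_pos (fun j _ => hg s i j) Finset.univ_nonempty)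
      (fun s => ha i s)
  have h3 : (∑ j, qKL (∑ i, U * diagonal (fun s => g s i j) * Uᵀ)
        (U * diagonal (b j) * Uᵀ))
      = ∑ j, ∑ s, skl (∑ i, g s i j) (b j s) := by
    refine Finset.sum_congr rfl fun j _ => ?_
    rw [sum_conj_diag U (fun i s => g s i j)]
    exact qKL_diag U hU _ _
      (fun s => Finset.sum_pos (fun i _ => hg s i j) Finset.univ_nonempty)
      (fun s => hb j s)
  have h4 : (∑ i, ∑ j, qH (U * diagonal (fun s => g s i j) * Uᵀ))
      = ∑ i, ∑ j, (-∑ s, (g s i j * Real.log (g s i j) - g s i j)) := by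
    refine Finset.sum_congr rfl fun i _ => Finset.sum_congr rfl fun j _ => ?_
    exact qH_diag U hU _
  rw [h1, h2, h3, h4]
  unfold sObj
  rw [Finset.sum_add_distrib, Finset.sum_add_distrib, Finset.sum_add_distrib,
    ← Finset.mul_sum, ← Finset.mul_sum, ← Finset.mul_sum]
  have e1 : (∑ i, ∑ j, ∑ s, g s i j * ct i j) = ∑ s, ∑ i, ∑ j, g s i j * ct i j :=
    sum_rot _
  have e2 : (∑ i, ∑ s, skl (∑ j, g s i j) (a i s)) = ∑ s, ∑ i, skl (∑ j, g s i j) (a i s) :=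
    Finset.sum_comm
  have e3 : (∑ j, ∑ s, skl (∑ i, g s i j) (b j s)) = ∑ s, ∑ j, skl (∑ i, g s i j) (b j s) :=
    Finset.sum_comm
  have e4 : (∑ i, ∑ j, (-∑ s, (g s i j * Real.log (g s i j) - g s i j)))
      = -∑ s, ∑ i, ∑ j, (g s i j * Real.log (g s i j) - g s i j) := by
    simp only [Finset.sum_neg_distrib]
    congr 1
    exact sum_rot _
  rw [e1, e2, e3, e4]
  ring

lemma trace_conj' (U : Matrix (Fin d) (Fin d) ℝ) (hU : Uᵀ * U = 1)
    (A : Matrix (Fin d) (Fin d) ℝ) : (Uᵀ * A * U).trace = A.trace := by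
  have h := trace_conj Uᵀ (by rw [transpose_transpose]; exact orth_comm hU) A
  rwa [transpose_transpose] at h

lemma trace_mul_diag (M : Matrix (Fin d) (Fin d) ℝ) (x : Fin d → ℝ) :
    (M * diagonal x).trace = ∑ s, M s s * x s := by
  simp only [Matrix.trace, Matrix.diag, Matrix.mul_apply, diagonal_apply, mul_ite, mul_zero,
    Finset.sum_ite_eq, Finset.sum_ite_eq', Finset.mem_univ, if_true]

lemma trace_mul_mlog_conj {P : Matrix (Fin d) (Fin d) ℝ} (hP : P.PosDef)
    (W : Matrix (Fin d) (Fin d) ℝ) (hW : Wᵀ * W = 1) :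
    ((Wᵀ * P * W) * mlog (Wᵀ * P * W)).trace = (P * mlog P).trace := by
  classical
  set V := (hP.1.eigenvectorUnitary : Matrix (Fin d) (Fin d) ℝ) with hVdef
  have hV2 : Vᵀ * V = 1 := by
    have := mem_unitaryGroup_iff'.mp hP.1.eigenvectorUnitary.2
    simpa [Matrix.star_eq_conjTranspose, conjTranspose_eq_transpose_of_trivial] using this
  have hspec : P = V * diagonal hP.1.eigenvalues * Vᵀ := by
    have h := hP.1.spectral_theorem
    simpa [Matrix.star_eq_conjTranspose, conjTranspose_eq_transpose_of_trivial,
      Function.comp] using h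
  have hWV : (Wᵀ * V)ᵀ * (Wᵀ * V) = 1 := by
    rw [transpose_mul, transpose_transpose]
    have : Vᵀ * W * (Wᵀ * V) = Vᵀ * (W * Wᵀ) * V := by noncomm_ring
    rw [this, orth_comm hW, mul_one, hV2]
  have hconj : Wᵀ * P * W = (Wᵀ * V) * diagonal hP.1.eigenvalues * (Wᵀ * V)ᵀ := by
    conv_lhs => rw [hspec]
    rw [transpose_mul, transpose_transpose]
    noncomm_ring
  rw [hconj, mlog_conj (Wᵀ * V) hWV, conj_mul_conj (Wᵀ * V) hWV,
    trace_conj_diag (Wᵀ * V) hWV, trace_mul_mlog_spectral hP]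

lemma qKL_ge {P : Matrix (Fin d) (Fin d) ℝ} (hP : P.PosDef)
    (U : Matrix (Fin d) (Fin d) ℝ) (hU : Uᵀ * U = 1) (q : Fin d → ℝ) (hq : ∀ s, 0 < q s) :
    ∑ s, skl ((Uᵀ * P * U) s s) (q s) ≤ qKL P (U * diagonal q * Uᵀ) := by
  have hP' : (Uᵀ * P * U).PosDef := posdef_conj hP U hU
  have hgpos : ∀ s, 0 < (Uᵀ * P * U) s s := fun s => posdef_diag_entry_pos hP' s
  have h1 : ∑ s, ((Uᵀ * P * U) s s) * Real.log ((Uᵀ * P * U) s s) ≤ (P * mlog P).trace := by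
    rw [← trace_mul_mlog_conj hP U hU]
    exact sum_diag_mul_log_le_trace hP'
  have h2 : (P * mlog (U * diagonal q * Uᵀ)).trace
      = ∑ s, (Uᵀ * P * U) s s * Real.log (q s) := by
    rw [mlog_conj U hU]
    have : P * (U * diagonal (fun s => Real.log (q s)) * Uᵀ)
        = (P * U * diagonal (fun s => Real.log (q s))) * Uᵀ := by noncomm_ring
    rw [this, trace_mul_cycle, trace_mul_diag]
    refine Finset.sum_congr rfl fun s _ => ?_
    rw [Matrix.mul_assoc]
  have h3 : P.trace = ∑ s, (Uᵀ * P * U) s s := by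
    rw [← trace_conj' U hU P]
    rfl
  have h4 : (U * diagonal q * Uᵀ).trace = ∑ s, q s := trace_conj_diag U hU q
  unfold qKL
  rw [trace_add, trace_sub, trace_sub, h2, h4]
  have h5 : ∑ s, skl ((Uᵀ * P * U) s s) (q s)
      = (∑ s, ((Uᵀ * P * U) s s) * Real.log ((Uᵀ * P * U) s s))
        - (∑ s, (Uᵀ * P * U) s s * Real.log (q s))
        - (∑ s, (Uᵀ * P * U) s s) + ∑ s, q s := by
    rw [← Finset.sum_sub_distrib, ← Finset.sum_sub_distrib, ← Finset.sum_add_distrib]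
    refine Finset.sum_congr rfl fun s _ => ?_
    unfold skl
    rw [Real.log_div (hgpos s).ne' (hq s).ne']
    ring
  rw [h5, ← h3]
  linarith

lemma neg_qH_ge {P : Matrix (Fin d) (Fin d) ℝ} (hP : P.PosDef)
    (U : Matrix (Fin d) (Fin d) ℝ) (hU : Uᵀ * U = 1) :
    ∑ s, (((Uᵀ * P * U) s s) * Real.log ((Uᵀ * P * U) s s) - (Uᵀ * P * U) s s)
      ≤ -qH P := by
  have hP' : (Uᵀ * P * U).PosDef := posdef_conj hP U hU
  have h1 : ∑ s, ((Uᵀ * P * U) s s) * Real.log ((Uᵀ * P * U) s s) ≤ (P * mlog P).trace := by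
    rw [← trace_mul_mlog_conj hP U hU]
    exact sum_diag_mul_log_le_trace hP'
  have h3 : P.trace = ∑ s, (Uᵀ * P * U) s s := by
    rw [← trace_conj' U hU P]
    rfl
  unfold qH
  rw [neg_neg, trace_sub, Finset.sum_sub_distrib]
  rw [← h3]
  linarith

lemma primal_ge {I J : Type*} [Fintype I] [Fintype J] [Nonempty I] [Nonempty J]
    (U : Matrix (Fin d) (Fin d) ℝ) (hU : Uᵀ * U = 1)
    (a : I → Fin d → ℝ) (b : J → Fin d → ℝ)
    (ha : ∀ i s, 0 < a i s) (hb : ∀ j s, 0 < b j s)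
    (ct : I → J → ℝ) (ρ1 ρ2 ε : ℝ) (hρ1 : 0 < ρ1) (hρ2 : 0 < ρ2) (hε : 0 < ε)
    (γ : I → J → Matrix (Fin d) (Fin d) ℝ) (hγ : ∀ i j, (γ i j).PosDef) :
    (∑ s, sObj ct (fun i => a i s) (fun j => b j s) ρ1 ρ2 ε
        (fun i j => (Uᵀ * γ i j * U) s s))
      ≤ primal (fun i j => ct i j • 1)
          (fun i => U * diagonal (a i) * Uᵀ) (fun j => U * diagonal (b j) * Uᵀ) ρ1 ρ2 ε γ := by
  set g : Fin d → I → J → ℝ := fun s i j => (Uᵀ * γ i j * U) s s with hgdef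
  have hconjsum1 : ∀ i, ∀ s : Fin d, (Uᵀ * (∑ j, γ i j) * U) s s = ∑ j, g s i j := by
    intro i s
    have : Uᵀ * (∑ j, γ i j) * U = ∑ j, Uᵀ * γ i j * U := by
      rw [Finset.mul_sum, Finset.sum_mul]
    rw [this, Matrix.sum_apply]
  have hconjsum2 : ∀ j, ∀ s : Fin d, (Uᵀ * (∑ i, γ i j) * U) s s = ∑ i, g s i j := by
    intro j s
    have : Uᵀ * (∑ i, γ i j) * U = ∑ i, Uᵀ * γ i j * U := by
      rw [Finset.mul_sum, Finset.sum_mul]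
    rw [this, Matrix.sum_apply]
  have hA : (∑ i, ∑ j, ((γ i j) * ((ct i j • (1 : Matrix (Fin d) (Fin d) ℝ)))ᵀ).trace)
      = ∑ i, ∑ j, ∑ s, g s i j * ct i j := by
    refine Finset.sum_congr rfl fun i _ => Finset.sum_congr rfl fun j _ => ?_
    rw [transpose_smul, transpose_one, Matrix.mul_smul, mul_one, trace_smul, smul_eq_mul]
    have htr : (γ i j).trace = ∑ s, g s i j := by
      rw [← trace_conj' U hU (γ i j)]
      rfl
    rw [htr, Finset.mul_sum]
    exact Finset.sum_congr rfl fun s _ => mul_comm _ _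
  have hB : ∀ i, ∑ s, skl (∑ j, g s i j) (a i s)
      ≤ qKL (∑ j, γ i j) (U * diagonal (a i) * Uᵀ) := by
    intro i
    have h := qKL_ge (posdef_sum fun j => hγ i j) U hU (a i) (ha i)
    refine le_trans (le_of_eq ?_) h
    exact Finset.sum_congr rfl fun s _ => by rw [hconjsum1 i s]
  have hC : ∀ j, ∑ s, skl (∑ i, g s i j) (b j s)
      ≤ qKL (∑ i, γ i j) (U * diagonal (b j) * Uᵀ) := by
    intro j
    have h := qKL_ge (posdef_sum fun i => hγ i j) U hU (b j) (hb j)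
    refine le_trans (le_of_eq ?_) h
    exact Finset.sum_congr rfl fun s _ => by rw [hconjsum2 j s]
  have hD : ∀ i j, ∑ s, (g s i j * Real.log (g s i j) - g s i j) ≤ -qH (γ i j) :=
    fun i j => neg_qH_ge (hγ i j) U hU
  have hRHS : (∑ s, sObj ct (fun i => a i s) (fun j => b j s) ρ1 ρ2 ε
        (fun i j => (Uᵀ * γ i j * U) s s))
      = (∑ i, ∑ j, ∑ s, g s i j * ct i j)
        + ρ1 * ∑ i, ∑ s, skl (∑ j, g s i j) (a i s)
        + ρ2 * ∑ j, ∑ s, skl (∑ i, g s i j) (b j s)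
        + ε * ∑ i, ∑ j, ∑ s, (g s i j * Real.log (g s i j) - g s i j) := by
    unfold sObj
    rw [Finset.sum_add_distrib, Finset.sum_add_distrib, Finset.sum_add_distrib,
      ← Finset.mul_sum, ← Finset.mul_sum, ← Finset.mul_sum]
    rw [show (∑ i, ∑ j, ∑ s, g s i j * ct i j) = ∑ s, ∑ i, ∑ j, g s i j * ct i j from sum_rot _]
    rw [show (∑ i, ∑ s, skl (∑ j, g s i j) (a i s))
        = ∑ s, ∑ i, skl (∑ j, g s i j) (a i s) from Finset.sum_comm]
    rw [show (∑ j, ∑ s, skl (∑ i, g s i j) (b j s))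
        = ∑ s, ∑ j, skl (∑ i, g s i j) (b j s) from Finset.sum_comm]
    rw [show (∑ i, ∑ j, ∑ s, (g s i j * Real.log (g s i j) - g s i j))
        = ∑ s, ∑ i, ∑ j, (g s i j * Real.log (g s i j) - g s i j) from sum_rot _]
  unfold primal
  rw [hRHS, hA]
  have hB' : ∑ i, ∑ s, skl (∑ j, g s i j) (a i s)
      ≤ ∑ i, qKL (∑ j, γ i j) (U * diagonal (a i) * Uᵀ) :=
    Finset.sum_le_sum fun i _ => hB i
  have hC' : ∑ j, ∑ s, skl (∑ i, g s i j) (b j s)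
      ≤ ∑ j, qKL (∑ i, γ i j) (U * diagonal (b j) * Uᵀ) :=
    Finset.sum_le_sum fun j _ => hC j
  have hD' : ∑ i, ∑ j, ∑ s, (g s i j * Real.log (g s i j) - g s i j)
      ≤ -∑ i, ∑ j, qH (γ i j) := by
    rw [← Finset.sum_neg_distrib]
    refine Finset.sum_le_sum fun i _ => ?_
    rw [← Finset.sum_neg_distrib]
    exact Finset.sum_le_sum fun j _ => hD i j
  have k1 := mul_le_mul_of_nonneg_left hB' hρ1.le
  have k2 := mul_le_mul_of_nonneg_left hC' hρ2.le
  have k3 := mul_le_mul_of_nonneg_left hD' hε.le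
  rw [mul_neg] at k3
  linarith

/-- **Common eigenbasis reduction.** If all inputs diagonalize in a common orthogonal
basis `U`, `μ_i = U diag(a_i) Uᵀ`, `ν_j = U diag(b_j) Uᵀ`, with positive eigenvalues,
and `c_{ij} = c̃_{ij}·Id`, then the quantum problem decomposes into `d` independent
scalar entropic unbalanced optimal transport problems along each eigendirection:
`W_ε(μ,ν) = Σ_{s=1}^d W̃_ε((a_{i,s})_i, (b_{j,s})_j)`. -/
theorem quantum_ot_common_eigenbasis_reduction {d : ℕ} {I J : Type*}
    [Fintype I] [Fintype J] [Nonempty I] [Nonempty J]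
    (U : Matrix (Fin d) (Fin d) ℝ) (hU : Uᵀ * U = 1)
    (a : I → Fin d → ℝ) (b : J → Fin d → ℝ)
    (ha : ∀ i s, 0 < a i s) (hb : ∀ j s, 0 < b j s)
    (ct : I → J → ℝ)
    (ρ1 ρ2 ε : ℝ) (hρ1 : 0 < ρ1) (hρ2 : 0 < ρ2) (hε : 0 < ε) :
    sInf {x : ℝ | ∃ γ : I → J → Matrix (Fin d) (Fin d) ℝ,
        (∀ i j, (γ i j).PosDef) ∧
        x = primal (fun i j => ct i j • 1)
              (fun i => U * diagonal (a i) * Uᵀ)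
              (fun j => U * diagonal (b j) * Uᵀ) ρ1 ρ2 ε γ}
      = ∑ s : Fin d,
          sInf {x : ℝ | ∃ g : I → J → ℝ, (∀ i j, 0 < g i j) ∧
            x = sObj ct (fun i => a i s) (fun j => b j s) ρ1 ρ2 ε g} := by
  classical
  set S : Set ℝ := {x : ℝ | ∃ γ : I → J → Matrix (Fin d) (Fin d) ℝ,
      (∀ i j, (γ i j).PosDef) ∧
      x = primal (fun i j => ct i j • 1)
            (fun i => U * diagonal (a i) * Uᵀ)
            (fun j => U * diagonal (b j) * Uᵀ) ρ1 ρ2 ε γ} with hSdef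
  set Ss : Fin d → Set ℝ := fun s => {x : ℝ | ∃ g : I → J → ℝ, (∀ i j, 0 < g i j) ∧
      x = sObj ct (fun i => a i s) (fun j => b j s) ρ1 ρ2 ε g} with hSsdef
  have hSsne : ∀ s, (Ss s).Nonempty := fun s =>
    ⟨_, ⟨fun _ _ => 1, fun i j => one_pos, rfl⟩⟩
  have hSsbdd : ∀ s, BddBelow (Ss s) := by
    intro s
    refine ⟨∑ i, ∑ j, -ε * Real.exp (-(ct i j)/ε), ?_⟩
    rintro x ⟨g, hg, rfl⟩
    exact sObj_lb ct _ _ ρ1 ρ2 ε g (fun i => ha i s) (fun j => hb j s) hρ1 hρ2 hε hg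
  have hlow : ∀ x ∈ S, (∑ s, sInf (Ss s)) ≤ x := by
    rintro x ⟨γ, hγ, rfl⟩
    calc ∑ s, sInf (Ss s)
        ≤ ∑ s, sObj ct (fun i => a i s) (fun j => b j s) ρ1 ρ2 ε
            (fun i j => (Uᵀ * γ i j * U) s s) := by
          refine Finset.sum_le_sum fun s _ => csInf_le (hSsbdd s) ?_
          exact ⟨fun i j => (Uᵀ * γ i j * U) s s,
            fun i j => posdef_diag_entry_pos (posdef_conj (hγ i j) U hU) s, rfl⟩
      _ ≤ _ := primal_ge U hU a b ha hb ct ρ1 ρ2 ε hρ1 hρ2 hε γ hγ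
  have hSne : S.Nonempty := ⟨_, ⟨fun _ _ => 1, fun i j => Matrix.PosDef.one, rfl⟩⟩
  have hSbdd : BddBelow S := ⟨∑ s, sInf (Ss s), fun x hx => hlow x hx⟩
  refine le_antisymm ?_ (le_csInf hSne hlow)
  refine le_of_forall_pos_le_add ?_
  intro δ hδ
  have hd1 : (0:ℝ) < (d:ℝ) + 1 := by positivity
  have hchoose : ∀ s : Fin d, ∃ g : I → J → ℝ, (∀ i j, 0 < g i j) ∧
      sObj ct (fun i => a i s) (fun j => b j s) ρ1 ρ2 ε g < sInf (Ss s) + δ/((d:ℝ)+1) := by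
    intro s
    obtain ⟨x, hxS, hxlt⟩ := exists_lt_of_csInf_lt (hSsne s)
      (lt_add_of_pos_right (sInf (Ss s)) (show (0:ℝ) < δ/((d:ℝ)+1) by positivity))
    obtain ⟨g, hg, rfl⟩ := hxS
    exact ⟨g, hg, hxlt⟩
  choose g hgpos hglt using hchoose
  have hpd : ∀ i j, (U * diagonal (fun s => g s i j) * Uᵀ).PosDef := by
    intro i j
    have h0 : (diagonal (fun s => g s i j)).PosDef :=
      Matrix.PosDef.diagonal (fun s => hgpos s i j)
    have h := posdef_conj h0 Uᵀ (by rw [transpose_transpose]; exact orth_comm hU)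
    rwa [transpose_transpose] at h
  have hmem : primal (fun i j => ct i j • 1)
      (fun i => U * diagonal (a i) * Uᵀ) (fun j => U * diagonal (b j) * Uᵀ) ρ1 ρ2 ε
      (fun i j => U * diagonal (fun s => g s i j) * Uᵀ) ∈ S :=
    ⟨fun i j => U * diagonal (fun s => g s i j) * Uᵀ, hpd, rfl⟩
  calc sInf S ≤ primal (fun i j => ct i j • 1)
        (fun i => U * diagonal (a i) * Uᵀ) (fun j => U * diagonal (b j) * Uᵀ) ρ1 ρ2 ε
        (fun i j => U * diagonal (fun s => g s i j) * Uᵀ) := csInf_le hSbdd hmem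
    _ = ∑ s, sObj ct (fun i => a i s) (fun j => b j s) ρ1 ρ2 ε (g s) :=
        primal_diag_eq U hU a b ha hb ct ρ1 ρ2 ε g hgpos
    _ ≤ ∑ s, (sInf (Ss s) + δ/((d:ℝ)+1)) := Finset.sum_le_sum fun s _ => (hglt s).le
    _ = (∑ s, sInf (Ss s)) + (d:ℝ) * (δ/((d:ℝ)+1)) := by
        rw [Finset.sum_add_distrib, Finset.sum_const, Finset.card_univ, Fintype.card_fin,
          nsmul_eq_mul]
    _ ≤ (∑ s, sInf (Ss s)) + δ := by
        have : (d:ℝ) * (δ/((d:ℝ)+1)) ≤ δ := by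
          rw [← mul_div_assoc, div_le_iff₀ hd1]
          nlinarith [Nat.cast_nonneg (α := ℝ) d]
        linarith
end
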